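/- arXiv:2011.06816 — 4 statements merged into one kernel-verified Lean document; each statement's English description precedes it below -/
import Mathlib

section
/- (Upper Cheeger inequality) Let Γ be a connected k-uniform hypergraph satisfying deg(v) ≤ Σ_{w≠v} deg(w) for all vertices v. Then k − λ_{n−1} ≤ 2(k−1)h, where λ_{n−1} is the second largest eigenvalue of the normalized Laplacian and h is the hypergraph Cheeger constant. -/
open Finset

/-- The degree of a vertex: number of edges (with multiplicity) containing it. -/
def hdeg {V : Type*} [DecidableEq V] (E : Multiset (Finset V)) (v : V) : ℕ :=
  Multiset.countP (fun e => v ∈ e) E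

/-- The volume of a set of vertices: sum of the degrees. -/
def hvol {V : Type*} [DecidableEq V] (E : Multiset (Finset V)) (S : Finset V) : ℕ :=
  ∑ v ∈ S, hdeg E v

/-- `E_r(S)`: the edges `e` (with multiplicity) with `|e ∩ S| = r`. -/
def Er {V : Type*} [DecidableEq V] (E : Multiset (Finset V)) (S : Finset V) (r : ℕ) :
    Multiset (Finset V) :=
  Multiset.filter (fun e => (e ∩ S).card = r) E

/-- `|E(v,w)|`: the number of edges (with multiplicity) containing both `v` and `w`. -/
def Evw {V : Type*} [DecidableEq V] (E : Multiset (Finset V)) (v w : V) : ℕ :=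
  Multiset.countP (fun e => v ∈ e ∧ w ∈ e) E

/-- The adjacency matrix: `A v w = -|E(v,w)|` for `v ≠ w` and `A v v = 0`. -/
noncomputable def adjM {V : Type*} [Fintype V] [DecidableEq V] (E : Multiset (Finset V)) : Matrix V V ℝ :=
  Matrix.of fun v w => if v = w then 0 else -(Evw E v w : ℝ)

/-- The normalized Laplacian `L = I - D⁻¹ A`. -/
noncomputable def lapM {V : Type*} [Fintype V] [DecidableEq V] (E : Multiset (Finset V)) : Matrix V V ℝ :=
  Matrix.of fun v w => (if v = w then (1 : ℝ) else 0) - adjM E v w / (hdeg E v : ℝ)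

/-- Connectedness: every pair of vertices is joined by a path of edges. -/
def HConnected {V : Type*} (E : Multiset (Finset V)) : Prop :=
  ∀ v w : V, Relation.ReflTransGen (fun a b => ∃ e ∈ E, a ∈ e ∧ b ∈ e) v w
/-- The Rayleigh quotient of a vertex function. -/
noncomputable def RQ {V : Type*} [Fintype V] [DecidableEq V] (E : Multiset (Finset V))
    (f : V → ℝ) : ℝ :=
  (E.map (fun e => (∑ v ∈ e, f v) ^ 2)).sum / ∑ v, (hdeg E v : ℝ) * f v ^ 2

/-- The second largest eigenvalue of the normalized Laplacian, via its variational
characterization `λ_{n-1} = max {RQ f : f ≠ 0, f ⊥ 1}`. -/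
noncomputable def lamSecond {V : Type*} [Fintype V] [DecidableEq V]
    (E : Multiset (Finset V)) : ℝ :=
  sSup {x : ℝ | ∃ f : V → ℝ, f ≠ 0 ∧ (∑ v, (hdeg E v : ℝ) * f v = 0) ∧ RQ E f = x}
/-- The generalized Cheeger constant `h` of a `k`-uniform hypergraph. -/
noncomputable def cheeger {V : Type*} [Fintype V] [DecidableEq V]
    (E : Multiset (Finset V)) (k : ℕ) : ℝ :=
  sInf {x : ℝ | ∃ S : Finset V, S.Nonempty ∧ S ≠ Finset.univ ∧
    x = ((∑ r ∈ Finset.Icc 1 (k - 1), Multiset.card (Er E S r) * r * (k - r) : ℕ) : ℝ) /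
      (min (hvol E S) (hvol E Sᶜ) : ℕ)}
lemma aux_exchange {V : Type*} [Fintype V] [DecidableEq V] (E : Multiset (Finset V)) (g : V → ℝ) :
    ∑ v, (hdeg E v : ℝ) * g v = (E.map (fun e => ∑ v ∈ e, g v)).sum := by
  induction E using Multiset.induction with
  | empty => simp [hdeg]
  | cons e E ih =>
    simp only [hdeg, Multiset.countP_cons, Multiset.map_cons, Multiset.sum_cons] at *
    have h : ∀ v : V, ((Multiset.countP (fun e' => v ∈ e') E + if v ∈ e then 1 else 0 : ℕ) : ℝ) * g v
        = (Multiset.countP (fun e' => v ∈ e') E : ℝ) * g v + (if v ∈ e then g v else 0) := by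
      intro v; split <;> push_cast <;> ring
    simp_rw [h]
    rw [Finset.sum_add_distrib, ih, Finset.sum_ite_mem, Finset.univ_inter]
    ring

lemma aux_count {V : Type*} [DecidableEq V] (S : Finset V) (k : ℕ) :
    ∀ E : Multiset (Finset V), (∀ e ∈ E, (e ∩ S).card ≤ k) →
    (E.map (fun e => (e ∩ S).card * (k - (e ∩ S).card))).sum
      = ∑ r ∈ Finset.range (k+1), Multiset.card (Er E S r) * (r * (k - r)) := by
  intro E
  induction E using Multiset.induction with
  | empty => simp [Er]
  | cons e E ih =>
    intro hle
    have hE : ∀ e' ∈ E, (e' ∩ S).card ≤ k := fun e' h => hle e' (Multiset.mem_cons_of_mem h)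
    have he : (e ∩ S).card ≤ k := hle e (Multiset.mem_cons_self e E)
    have hEr : ∀ r, Multiset.card (Er (e ::ₘ E) S r)
        = Multiset.card (Er E S r) + if (e ∩ S).card = r then 1 else 0 := by
      intro r
      simp only [Er, Multiset.filter_cons]
      split <;> simp [add_comm]
    simp only [Multiset.map_cons, Multiset.sum_cons, ih hE, hEr, add_mul, ite_mul, one_mul,
      zero_mul, Finset.sum_add_distrib]
    rw [Finset.sum_ite_eq (Finset.range (k+1)) ((e ∩ S).card) (fun r => r * (k - r))]
    rw [if_pos (Finset.mem_range.mpr (Nat.lt_succ_of_le he))]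
    ring

lemma aux_icc (k : ℕ) (c : ℕ → ℕ) :
    ∑ r ∈ Finset.Icc 1 (k-1), c r * r * (k - r)
      = ∑ r ∈ Finset.range (k+1), c r * (r * (k - r)) := by
  have hsub : Finset.Icc 1 (k-1) ⊆ Finset.range (k+1) := by
    intro r hr
    simp only [Finset.mem_Icc] at hr
    exact Finset.mem_range.mpr (by omega)
  have hz : ∀ r ∈ Finset.range (k+1), r ∉ Finset.Icc 1 (k-1) → c r * (r * (k - r)) = 0 := by
    intro r hr hnr
    simp only [Finset.mem_range] at hr
    simp only [Finset.mem_Icc, not_and_or, not_le] at hnr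
    rcases hnr with h | h
    · interval_cases r; simp
    · have h0 : k - r = 0 := by omega
      simp [h0]
  calc ∑ r ∈ Finset.Icc 1 (k-1), c r * r * (k - r)
      = ∑ r ∈ Finset.Icc 1 (k-1), c r * (r * (k - r)) :=
        Finset.sum_congr rfl (fun r _ => by ring)
    _ = ∑ r ∈ Finset.range (k+1), c r * (r * (k - r)) := Finset.sum_subset hsub hz

lemma aux_rtg {α : Type*} {r : α → α → Prop} {a b : α} (h : Relation.ReflTransGen r a b) :
    a ≠ b → ∃ x y, x ≠ y ∧ r x y := by
  induction h with
  | refl => intro hab; exact absurd rfl hab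
  | @tail b c h' step ih =>
    intro hac
    by_cases hbc : b = c
    · exact ih (hbc ▸ hac)
    · exact ⟨b, c, hbc, step⟩

lemma aux_map_sub {α : Type*} (E : Multiset α) (g1 g2 : α → ℝ) :
    (E.map g1).sum - (E.map g2).sum = (E.map (fun e => g1 e - g2 e)).sum := by
  induction E using Multiset.induction with
  | empty => simp
  | cons a s ih => simp only [Multiset.map_cons, Multiset.sum_cons, ← ih]; ring

lemma aux_volcast {V : Type*} [Fintype V] [DecidableEq V] (E : Multiset (Finset V))
    (S : Finset V) : (hvol E S : ℝ) = ∑ v ∈ S, (hdeg E v : ℝ) := by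
  rw [hvol]; push_cast; rfl

theorem stmt6 {V : Type*} [Fintype V] [DecidableEq V] [Nonempty V]
    (E : Multiset (Finset V)) (k : ℕ)
    (hk : ∀ e ∈ E, e.card = k) (hconn : HConnected E) (hdegpos : ∀ v, 0 < hdeg E v)
    (hass : ∀ v : V, hdeg E v ≤ ∑ w ∈ Finset.univ.erase v, hdeg E w) :
    (k : ℝ) - lamSecond E ≤ 2 * ((k : ℝ) - 1) * cheeger E k := by
  classical
  obtain ⟨v0⟩ := (inferInstance : Nonempty V)
  -- there exists a vertex ≠ v0
  have hwex : ∃ w : V, w ≠ v0 := by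
    by_contra hno
    push_neg at hno
    have h1 : (0:ℕ) < ∑ w ∈ Finset.univ.erase v0, hdeg E w := (hdegpos v0).trans_le (hass v0)
    have h2 : Finset.univ.erase v0 = ∅ := by
      ext w; simp [Finset.mem_erase, hno w]
    rw [h2] at h1
    simp at h1
  obtain ⟨w0, hw0⟩ := hwex
  -- k ≥ 2
  have hk2 : 2 ≤ k := by
    obtain ⟨a, b, hab, e0, he0, hae0, hbe0⟩ := aux_rtg (hconn w0 v0) hw0
    have h2 : 1 < e0.card := Finset.one_lt_card.mpr ⟨a, hae0, b, hbe0, hab⟩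
    rwa [hk e0 he0] at h2
  -- the cheeger set
  set g : Finset V → ℝ := fun S =>
    ((∑ r ∈ Finset.Icc 1 (k - 1), Multiset.card (Er E S r) * r * (k - r) : ℕ) : ℝ) /
      (min (hvol E S) (hvol E Sᶜ) : ℕ) with hgdef
  have hche : cheeger E k = sInf {x : ℝ | ∃ S : Finset V, S.Nonempty ∧ S ≠ Finset.univ ∧ x = g S} := rfl
  set 𝒮 : Set ℝ := {x : ℝ | ∃ S : Finset V, S.Nonempty ∧ S ≠ Finset.univ ∧ x = g S} with hSdef
  have hfin : 𝒮.Finite := Set.Finite.subset (Set.finite_range g) (by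
    rintro x ⟨S, -, -, rfl⟩; exact ⟨S, rfl⟩)
  have hSne : 𝒮.Nonempty := ⟨g {v0}, {v0}, Finset.singleton_nonempty v0,
    fun h => hw0 (Finset.mem_singleton.mp (h ▸ Finset.mem_univ w0)), rfl⟩
  obtain ⟨S, hSnon, hSuniv, hSval⟩ := hSne.csInf_mem hfin
  -- volumes
  obtain ⟨wc, hwc⟩ : ∃ w, w ∉ S := by
    by_contra hcon; push_neg at hcon
    exact hSuniv (Finset.eq_univ_iff_forall.mpr hcon)
  have hs : 0 < hvol E S := Finset.sum_pos (fun v _ => hdegpos v) hSnon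
  have ht : 0 < hvol E Sᶜ :=
    Finset.sum_pos (fun v _ => hdegpos v) ⟨wc, Finset.mem_compl.mpr hwc⟩
  set sR : ℝ := (hvol E S : ℝ) with hsRdef
  set tR : ℝ := (hvol E Sᶜ : ℝ) with htRdef
  have hsR : 0 < sR := by rw [hsRdef]; exact_mod_cast hs
  have htR : 0 < tR := by rw [htRdef]; exact_mod_cast ht
  -- the test function
  set f : V → ℝ := fun v => if v ∈ S then tR else -sR with hfdef
  obtain ⟨vS, hvS⟩ := hSnon
  have hf0 : f ≠ 0 := by
    intro h
    have h2 := congrFun h vS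
    simp only [hfdef, if_pos hvS, Pi.zero_apply] at h2
    exact absurd h2 (ne_of_gt htR)
  have horth : ∑ v, (hdeg E v : ℝ) * f v = 0 := by
    rw [← Finset.sum_add_sum_compl S]
    have h1 : ∀ v ∈ S, (hdeg E v : ℝ) * f v = (hdeg E v : ℝ) * tR := by
      intro v hv; simp [hfdef, if_pos hv]
    have h2 : ∀ v ∈ Sᶜ, (hdeg E v : ℝ) * f v = (hdeg E v : ℝ) * (-sR) := by
      intro v hv; simp [hfdef, if_neg (Finset.mem_compl.mp hv)]
    rw [Finset.sum_congr rfl h1, Finset.sum_congr rfl h2, ← Finset.sum_mul, ← Finset.sum_mul,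
      ← aux_volcast, ← aux_volcast]
    ring
  have hD : ∑ v, (hdeg E v : ℝ) * f v ^ 2 = sR * tR * (sR + tR) := by
    rw [← Finset.sum_add_sum_compl S]
    have h1 : ∀ v ∈ S, (hdeg E v : ℝ) * f v ^ 2 = (hdeg E v : ℝ) * tR ^ 2 := by
      intro v hv; simp [hfdef, if_pos hv]
    have h2 : ∀ v ∈ Sᶜ, (hdeg E v : ℝ) * f v ^ 2 = (hdeg E v : ℝ) * sR ^ 2 := by
      intro v hv; simp [hfdef, if_neg (Finset.mem_compl.mp hv)]; try ring
    rw [Finset.sum_congr rfl h1, Finset.sum_congr rfl h2, ← Finset.sum_mul, ← Finset.sum_mul,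
      ← aux_volcast, ← aux_volcast]
    ring
  have hDpos : 0 < sR * tR * (sR + tR) := by positivity
  -- per-edge computations
  have hr_le : ∀ e ∈ E, (e ∩ S).card ≤ k := fun e he =>
    (Finset.card_le_card Finset.inter_subset_left).trans_eq (hk e he)
  have hfe : ∀ e ∈ E, ∑ v ∈ e, f v = (tR + sR) * ((e ∩ S).card : ℝ) - sR * k := by
    intro e he
    have h1 : ∀ v ∈ e, f v = (tR + sR) * (if v ∈ S then (1:ℝ) else 0) - sR := by
      intro v _; by_cases h : v ∈ S <;> simp [hfdef, h] <;> try ring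
    rw [Finset.sum_congr rfl h1, Finset.sum_sub_distrib, ← Finset.mul_sum, Finset.sum_ite_mem,
      Finset.sum_const, Finset.sum_const, nsmul_eq_mul, nsmul_eq_mul, mul_one, hk e he]
    ring
  have hfe2 : ∀ e ∈ E, ∑ v ∈ e, f v ^ 2 = (tR ^ 2 - sR ^ 2) * ((e ∩ S).card : ℝ) + sR ^ 2 * k := by
    intro e he
    have h1 : ∀ v ∈ e, f v ^ 2 = (tR ^ 2 - sR ^ 2) * (if v ∈ S then (1:ℝ) else 0) + sR ^ 2 := by
      intro v _; by_cases h : v ∈ S <;> simp [hfdef, h] <;> try ring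
    rw [Finset.sum_congr rfl h1, Finset.sum_add_distrib, ← Finset.mul_sum, Finset.sum_ite_mem,
      Finset.sum_const, Finset.sum_const, nsmul_eq_mul, nsmul_eq_mul, mul_one, hk e he]
    ring
  -- the numerator N
  set N : ℕ := ∑ r ∈ Finset.Icc 1 (k - 1), Multiset.card (Er E S r) * r * (k - r) with hNdef
  have hNsum : ((E.map (fun e => (e ∩ S).card * (k - (e ∩ S).card))).sum : ℕ) = N := by
    rw [aux_count S k E hr_le, hNdef, aux_icc]
  -- key identity
  have hkey : (k:ℝ) * (sR * tR * (sR + tR)) - (E.map (fun e => (∑ v ∈ e, f v) ^ 2)).sum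
      = (sR + tR) ^ 2 * N := by
    rw [← hD, aux_exchange E (fun v => f v ^ 2), ← Multiset.sum_map_mul_left, aux_map_sub]
    have hmapeq : E.map (fun e => (k:ℝ) * ∑ v ∈ e, f v ^ 2 - (∑ v ∈ e, f v) ^ 2)
        = E.map (fun e => (((e ∩ S).card * (k - (e ∩ S).card) : ℕ) : ℝ) * (sR + tR) ^ 2) := by
      apply Multiset.map_congr rfl
      intro e he
      rw [hfe e he, hfe2 e he]
      have hle := hr_le e he
      push_cast [Nat.cast_sub hle]
      ring
    rw [hmapeq, Multiset.sum_map_mul_right]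
    rw [show (E.map (fun e => (((e ∩ S).card * (k - (e ∩ S).card) : ℕ) : ℝ))) =
        (E.map (fun e => (e ∩ S).card * (k - (e ∩ S).card))).map (Nat.cast) by
      rw [Multiset.map_map]; rfl]
    rw [← Nat.cast_multiset_sum, hNsum]
    ring
  -- lamSecond ≥ RQ f
  have hbdd : BddAbove {x : ℝ | ∃ f : V → ℝ, f ≠ 0 ∧ (∑ v, (hdeg E v : ℝ) * f v = 0) ∧ RQ E f = x} := by
    refine ⟨k, ?_⟩
    rintro x ⟨f', hf', -, rfl⟩
    have hD' : 0 < ∑ v, (hdeg E v : ℝ) * f' v ^ 2 := by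
      obtain ⟨v, hv⟩ := Function.ne_iff.mp hf'
      have hv' : f' v ≠ 0 := by simpa using hv
      refine Finset.sum_pos' (fun i _ => by positivity) ⟨v, Finset.mem_univ v, ?_⟩
      have hdv : (0:ℝ) < hdeg E v := by exact_mod_cast hdegpos v
      exact mul_pos hdv (by positivity)
    have hnum : (E.map (fun e => (∑ v ∈ e, f' v) ^ 2)).sum
        ≤ (k:ℝ) * ∑ v, (hdeg E v : ℝ) * f' v ^ 2 := by
      rw [aux_exchange E (fun v => f' v ^ 2), ← Multiset.sum_map_mul_left]
      apply Multiset.sum_map_le_sum_map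
      intro e he
      calc (∑ v ∈ e, f' v) ^ 2 ≤ (e.card : ℝ) * ∑ v ∈ e, f' v ^ 2 :=
            sq_sum_le_card_mul_sum_sq
        _ = (k:ℝ) * ∑ v ∈ e, f' v ^ 2 := by rw [hk e he]
    rw [RQ, div_le_iff₀ hD']
    exact hnum
  have hlam : RQ E f ≤ lamSecond E := le_csSup hbdd ⟨f, hf0, horth, rfl⟩
  -- main inequality
  set mR : ℝ := ((min (hvol E S) (hvol E Sᶜ) : ℕ) : ℝ) with hmRdef
  have hmpos : 0 < mR := by
    rw [hmRdef]
    exact_mod_cast lt_min hs ht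
  have hms : mR ≤ sR := by rw [hmRdef, hsRdef]; exact_mod_cast min_le_left _ _
  have hmt : mR ≤ tR := by rw [hmRdef, htRdef]; exact_mod_cast min_le_right _ _
  have hNnn : (0:ℝ) ≤ (N:ℝ) := Nat.cast_nonneg N
  have hgS : g S = (N:ℝ) / mR := rfl
  have hRQval : (k:ℝ) - RQ E f = (sR + tR) ^ 2 * N / (sR * tR * (sR + tR)) := by
    rw [RQ, hD, eq_div_iff hDpos.ne', sub_mul, div_mul_cancel₀ _ hDpos.ne']
    linarith [hkey]
  have hineq : (sR + tR) ^ 2 * N / (sR * tR * (sR + tR)) ≤ 2 * ((k:ℝ) - 1) * ((N:ℝ) / mR) := by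
    rw [mul_div_assoc'] at *
    rw [div_le_div_iff₀ hDpos hmpos]
    have hk1 : (1:ℝ) ≤ (k:ℝ) - 1 := by
      have : (2:ℝ) ≤ (k:ℝ) := by exact_mod_cast hk2
      linarith
    nlinarith [mul_nonneg (mul_nonneg hsR.le htR.le) hNnn,
      mul_nonneg (mul_nonneg (mul_nonneg hsR.le htR.le) hNnn) (sub_nonneg.mpr hk1),
      mul_le_mul_of_nonneg_right hms (mul_nonneg htR.le hNnn),
      mul_le_mul_of_nonneg_right hmt (mul_nonneg hsR.le hNnn),
      mul_pos hsR htR, sq_nonneg (sR + tR), mul_pos (mul_pos hsR htR) (by linarith : (0:ℝ) < sR + tR)]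
    -- goal: (sR+tR)^2 * N * mR ≤ 2 * ((k:ℝ)-1) * N * (sR * tR * (sR + tR))
  have hchev : cheeger E k = (N:ℝ) / mR := by rw [hche, hSval]
  rw [hchev]
  calc (k:ℝ) - lamSecond E ≤ (k:ℝ) - RQ E f := by linarith [hlam]
    _ = (sR + tR) ^ 2 * N / (sR * tR * (sR + tR)) := hRQval
    _ ≤ 2 * ((k:ℝ) - 1) * ((N:ℝ) / mR) := hineq
end

section
/- (Lower Cheeger inequality) Let Γ be a connected k-uniform hypergraph satisfying deg(v) ≤ Σ_{w≠v} deg(w) for all vertices v. Then k − λ_{n−1} ≥ h²/(2(k−1)), where λ_{n−1} is the second largest eigenvalue of the normalized Laplacian and h is the hypergraph Cheeger constant. -/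
set_option linter.unusedSectionVars false
set_option maxHeartbeats 1000000


open Finset

namespace S7
variable {V : Type*} [Fintype V] [DecidableEq V]

noncomputable def dR (E : Multiset (Finset V)) (v : V) : ℝ := (hdeg E v : ℝ)
noncomputable def volR (E : Multiset (Finset V)) (S : Finset V) : ℝ := ∑ v ∈ S, dR E v
noncomputable def w (E : Multiset (Finset V)) (u v : V) : ℝ :=
  if u = v then 0 else (Evw E u v : ℝ)
noncomputable def Num (E : Multiset (Finset V)) (f : V → ℝ) : ℝ :=
  ∑ u, ∑ v, w E u v * (f u - f v) ^ 2
noncomputable def Den (E : Multiset (Finset V)) (f : V → ℝ) : ℝ :=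
  ∑ v, dR E v * f v ^ 2

lemma dR_nonneg (E : Multiset (Finset V)) (v : V) : 0 ≤ dR E v := Nat.cast_nonneg _

lemma w_nonneg (E : Multiset (Finset V)) (u v : V) : 0 ≤ w E u v := by
  unfold w; split <;> positivity

lemma w_symm (E : Multiset (Finset V)) (u v : V) : w E u v = w E v u := by
  unfold w
  rcases eq_or_ne u v with h | h
  · simp [h]
  · rw [if_neg h, if_neg (Ne.symm h)]
    congr 1
    unfold Evw
    exact Multiset.countP_congr rfl (fun e _ => by rw [and_comm])

lemma Num_nonneg (E : Multiset (Finset V)) (f : V → ℝ) : 0 ≤ Num E f := by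
  apply Finset.sum_nonneg; intro u _; apply Finset.sum_nonneg; intro v _
  exact mul_nonneg (w_nonneg E u v) (sq_nonneg _)

lemma Den_nonneg (E : Multiset (Finset V)) (f : V → ℝ) : 0 ≤ Den E f := by
  apply Finset.sum_nonneg; intro v _; exact mul_nonneg (dR_nonneg E v) (sq_nonneg _)

lemma volR_nonneg (E : Multiset (Finset V)) (S : Finset V) : 0 ≤ volR E S :=
  Finset.sum_nonneg fun v _ => dR_nonneg E v

lemma volR_pos (E : Multiset (Finset V)) (hdegpos : ∀ v, 0 < hdeg E v) {S : Finset V}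
    (hS : S.Nonempty) : 0 < volR E S :=
  Finset.sum_pos (fun v _ => by unfold dR; exact_mod_cast hdegpos v) hS

lemma volR_mono (E : Multiset (Finset V)) {S T : Finset V} (h : S ⊆ T) :
    volR E S ≤ volR E T :=
  Finset.sum_le_sum_of_subset_of_nonneg h (fun v _ _ => dR_nonneg E v)

/-- Edge-vertex sum exchange. -/
lemma edge_sum (E : Multiset (Finset V)) (g : V → ℝ) :
    (E.map (fun e => ∑ v ∈ e, g v)).sum = ∑ v, dR E v * g v := by
  induction E using Multiset.induction_on with
  | empty => simp [dR, hdeg]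
  | cons e E ih =>
      rw [Multiset.map_cons, Multiset.sum_cons, ih]
      have : ∀ v : V, dR (e ::ₘ E) v * g v = dR E v * g v + (if v ∈ e then g v else 0) := by
        intro v
        unfold dR hdeg
        rw [Multiset.countP_cons]
        push_cast
        split <;> ring
      rw [Finset.sum_congr rfl (fun v _ => this v), Finset.sum_add_distrib]
      rw [Finset.sum_ite_mem, Finset.univ_inter]
      ring

/-- Edge pair-sum exchange. -/
lemma pair_sum (E : Multiset (Finset V)) (F : V → V → ℝ) (hF : ∀ u, F u u = 0) :
    (E.map (fun e => ∑ u ∈ e, ∑ v ∈ e, F u v)).sum = ∑ u, ∑ v, w E u v * F u v := by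
  induction E using Multiset.induction_on with
  | empty => simp [w, Evw]
  | cons e E ih =>
      rw [Multiset.map_cons, Multiset.sum_cons, ih]
      have hw : ∀ u v : V, w (e ::ₘ E) u v * F u v
          = w E u v * F u v + (if u ∈ e ∧ v ∈ e then F u v else 0) := by
        intro u v
        unfold w Evw
        rw [Multiset.countP_cons]
        rcases eq_or_ne u v with h | h
        · subst h; simp [hF]
        · rw [if_neg h, if_neg h]
          push_cast
          split <;> ring
      calc (∑ u ∈ e, ∑ v ∈ e, F u v) + ∑ u, ∑ v, w E u v * F u v
          = ∑ u, ∑ v, (w E u v * F u v + (if u ∈ e ∧ v ∈ e then F u v else 0)) := by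
            rw [Finset.sum_congr rfl (fun u _ => Finset.sum_add_distrib)]
            rw [Finset.sum_add_distrib]
            have h1 : ∀ u : V, ∑ v, (if u ∈ e ∧ v ∈ e then F u v else 0)
                = (if u ∈ e then ∑ v ∈ e, F u v else 0) := by
              intro u; by_cases hu : u ∈ e <;> simp [hu, Finset.sum_ite_mem]
            rw [Finset.sum_congr rfl fun u _ => h1 u, Finset.sum_ite_mem, Finset.univ_inter]
            ring
        _ = ∑ u, ∑ v, w (e ::ₘ E) u v * F u v := by
            exact (Finset.sum_congr rfl (fun u _ => Finset.sum_congr rfl (fun v _ => (hw u v).symm)))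

/-- Sum of `Evw` over second argument. -/
lemma sum_Evw (E : Multiset (Finset V)) (u : V) :
    ∑ v, (Evw E u v : ℝ) = (E.map (fun e => if u ∈ e then (e.card : ℝ) else 0)).sum := by
  induction E using Multiset.induction_on with
  | empty => simp [Evw]
  | cons e E ih =>
      rw [Multiset.map_cons, Multiset.sum_cons]
      have : ∀ v : V, (Evw (e ::ₘ E) u v : ℝ)
          = (Evw E u v : ℝ) + (if u ∈ e ∧ v ∈ e then 1 else 0) := by
        intro v; unfold Evw; rw [Multiset.countP_cons]; push_cast; split <;> ring
      rw [Finset.sum_congr rfl fun v _ => this v, Finset.sum_add_distrib, ih]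
      have h1 : ∑ v, (if u ∈ e ∧ v ∈ e then (1:ℝ) else 0) = if u ∈ e then (e.card : ℝ) else 0 := by
        by_cases hu : u ∈ e <;> simp [hu, Finset.sum_ite_mem]
      rw [h1]; ring

lemma Evw_self (E : Multiset (Finset V)) (u : V) : Evw E u u = hdeg E u := by
  unfold Evw hdeg; exact Multiset.countP_congr rfl (fun e _ => by simp)

lemma map_indicator_sum (E : Multiset (Finset V)) (u : V) (c : ℝ) :
    (E.map (fun e => if u ∈ e then c else 0)).sum = c * dR E u := by
  unfold dR hdeg
  induction E using Multiset.induction_on with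
  | empty => simp
  | cons e E ih =>
      rw [Multiset.map_cons, Multiset.sum_cons, ih, Multiset.countP_cons]
      push_cast
      split <;> ring

/-- Row sums of the weight matrix. -/
lemma row_sum {E : Multiset (Finset V)} {k : ℕ} (hk : ∀ e ∈ E, e.card = k) (u : V) :
    ∑ v, w E u v = ((k : ℝ) - 1) * dR E u := by
  have h1 : ∀ v, w E u v = (Evw E u v : ℝ) - (if v = u then (Evw E u u : ℝ) else 0) := by
    intro v
    unfold w
    rcases eq_or_ne u v with h | h
    · subst h; simp
    · rw [if_neg h, if_neg (Ne.symm h)]; ring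
  rw [Finset.sum_congr rfl fun v _ => h1 v, Finset.sum_sub_distrib, sum_Evw,
    Finset.sum_ite_eq' univ u (fun _ => (Evw E u u : ℝ)), if_pos (Finset.mem_univ u), Evw_self]
  have h2 : (E.map (fun e => if u ∈ e then (e.card : ℝ) else 0)).sum
      = (E.map (fun e => if u ∈ e then (k : ℝ) else 0)).sum := by
    congr 1
    exact Multiset.map_congr rfl (fun e he => by rw [hk e he])
  rw [h2, map_indicator_sum]; unfold dR; ring

lemma col_sum {E : Multiset (Finset V)} {k : ℕ} (hk : ∀ e ∈ E, e.card = k) (v : V) :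
    ∑ u, w E u v = ((k : ℝ) - 1) * dR E v := by
  rw [Finset.sum_congr rfl fun u _ => w_symm E u v]; exact row_sum hk v

/-- The (ordered-pairs) cut weight of a vertex set. -/
noncomputable def cutW (E : Multiset (Finset V)) (S : Finset V) : ℝ :=
  ∑ u ∈ S, ∑ v ∈ Sᶜ, w E u v

lemma cutW_nonneg (E : Multiset (Finset V)) (S : Finset V) : 0 ≤ cutW E S :=
  Finset.sum_nonneg fun u _ => Finset.sum_nonneg fun v _ => w_nonneg E u v

lemma cutW_ind (E : Multiset (Finset V)) (S : Finset V) :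
    ∑ u, ∑ v, w E u v * ((if u ∈ S then (1:ℝ) else 0) * (if v ∈ S then 0 else 1))
      = cutW E S := by
  unfold cutW
  rw [Finset.sum_congr rfl (g := fun u => if u ∈ S then ∑ v ∈ Sᶜ, w E u v else 0)
    (fun u _ => ?_), Finset.sum_ite_mem, Finset.univ_inter]
  by_cases hu : u ∈ S
  · simp only [hu, if_true, one_mul]
    rw [Finset.sum_congr rfl (g := fun v => if v ∈ Sᶜ then w E u v else 0) (fun v _ => ?_),
      Finset.sum_ite_mem, Finset.univ_inter]
    by_cases hv : v ∈ S <;> simp [hv]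
  · simp [hu]

/-- Edge formula for the cut weight. -/
lemma cutW_eq {E : Multiset (Finset V)} {k : ℕ} (hk : ∀ e ∈ E, e.card = k) (S : Finset V) :
    cutW E S = (E.map (fun e => ((e ∩ S).card : ℝ) * ((k : ℝ) - (e ∩ S).card))).sum := by
  have key := pair_sum E (fun u v => (if u ∈ S then (1:ℝ) else 0) * (if v ∈ S then 0 else 1))
    (fun u => by by_cases hu : u ∈ S <;> simp [hu])
  have lhs := cutW_ind E S
  have rhs : (E.map (fun e => ∑ u ∈ e, ∑ v ∈ e,
      (if u ∈ S then (1:ℝ) else 0) * (if v ∈ S then 0 else 1))).sum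
      = (E.map (fun e => ((e ∩ S).card : ℝ) * ((k : ℝ) - (e ∩ S).card))).sum := by
    congr 1
    refine Multiset.map_congr rfl (fun e he => ?_)
    rw [← Finset.sum_mul_sum]
    have hA : ∑ u ∈ e, (if u ∈ S then (1:ℝ) else 0) = ((e ∩ S).card : ℝ) := by
      rw [Finset.sum_ite_mem]; simp
    have hB : ∑ v ∈ e, (if v ∈ S then (0:ℝ) else 1) = (k : ℝ) - ((e ∩ S).card : ℝ) := by
      have : ∀ v, (if v ∈ S then (0:ℝ) else 1) = 1 - (if v ∈ S then 1 else 0) := by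
        intro v; split <;> ring
      rw [Finset.sum_congr rfl fun v _ => this v, Finset.sum_sub_distrib, Finset.sum_const,
        Finset.sum_ite_mem]
      simp [hk e he]
    rw [hA, hB]
  rw [← lhs, ← key, rhs]

/-- Vertex-sum formula for volume. -/
lemma vol_edge (E : Multiset (Finset V)) (S : Finset V) :
    (E.map (fun e => ((e ∩ S).card : ℝ))).sum = volR E S := by
  have h1 : (E.map (fun e => ((e ∩ S).card : ℝ))).sum
      = (E.map (fun e => ∑ v ∈ e, (if v ∈ S then (1:ℝ) else 0))).sum := by
    congr 1
    refine Multiset.map_congr rfl (fun e _ => ?_)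
    rw [Finset.sum_ite_mem]; simp
  rw [h1, edge_sum]
  unfold volR
  rw [Finset.sum_congr rfl (g := fun v => if v ∈ S then dR E v else 0) (fun v _ => by
    by_cases hv : v ∈ S <;> simp [hv]), Finset.sum_ite_mem, Finset.univ_inter]

/-- The `Icc` sum in the cheeger definition equals the edge cut sum (real version). -/
lemma icc_cut {k : ℕ} (E : Multiset (Finset V)) (hk : ∀ e ∈ E, e.card = k) (S : Finset V) :
    ∑ r ∈ Finset.Icc 1 (k - 1), (Multiset.card (Er E S r) : ℝ) * r * ((k : ℝ) - r)
      = (E.map (fun e => ((e ∩ S).card : ℝ) * ((k : ℝ) - (e ∩ S).card))).sum := by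
  induction E using Multiset.induction_on with
  | empty => simp [Er]
  | cons e E ih =>
      have hkE : ∀ e ∈ E, e.card = k := fun e' he' => hk e' (Multiset.mem_cons_of_mem he')
      have hke : e.card = k := hk e (Multiset.mem_cons_self e E)
      rw [Multiset.map_cons, Multiset.sum_cons]
      have hEr : ∀ r, (Multiset.card (Er (e ::ₘ E) S r) : ℝ)
          = (Multiset.card (Er E S r) : ℝ) + (if (e ∩ S).card = r then 1 else 0) := by
        intro r
        unfold Er
        rw [Multiset.filter_cons]
        split <;> simp
      have : ∑ r ∈ Finset.Icc 1 (k - 1), (Multiset.card (Er (e ::ₘ E) S r) : ℝ) * r * ((k:ℝ) - r)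
          = (∑ r ∈ Finset.Icc 1 (k - 1), (Multiset.card (Er E S r) : ℝ) * r * ((k:ℝ) - r))
            + ∑ r ∈ Finset.Icc 1 (k - 1), (if r = (e ∩ S).card then ((r:ℝ) * ((k:ℝ) - r)) else 0) := by
        rw [← Finset.sum_add_distrib]
        refine Finset.sum_congr rfl (fun r _ => ?_)
        rw [hEr r]
        rcases eq_or_ne ((e ∩ S).card) r with h | h
        · rw [if_pos h, if_pos h.symm]; ring
        · rw [if_neg h, if_neg (Ne.symm h)]; ring
      rw [this, ih hkE, Finset.sum_ite_eq' (Finset.Icc 1 (k-1)) ((e ∩ S).card)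
        (fun r => (r:ℝ) * ((k:ℝ) - r))]
      have hcle : (e ∩ S).card ≤ k := hke ▸ Finset.card_le_card Finset.inter_subset_left
      set c := (e ∩ S).card with hc
      have : (if c ∈ Finset.Icc 1 (k-1) then (c:ℝ) * ((k:ℝ) - c) else 0)
          = (c:ℝ) * ((k:ℝ) - c) := by
        split
        · rfl
        · next hmem =>
            rw [Finset.mem_Icc] at hmem
            have : c = 0 ∨ c = k := by omega
            rcases this with h | h <;> rw [h] <;> push_cast <;> ring
      rw [this]; ring

/-- Casting the natural Cheeger numerator. -/
lemma icc_cast {k : ℕ} (E : Multiset (Finset V)) (S : Finset V) :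
    ((∑ r ∈ Finset.Icc 1 (k - 1), Multiset.card (Er E S r) * r * (k - r) : ℕ) : ℝ)
      = ∑ r ∈ Finset.Icc 1 (k - 1), (Multiset.card (Er E S r) : ℝ) * r * ((k : ℝ) - r) := by
  rw [Nat.cast_sum]
  refine Finset.sum_congr rfl (fun r hr => ?_)
  rw [Finset.mem_Icc] at hr
  have hrk : r ≤ k := le_trans hr.2 (Nat.sub_le k 1)
  push_cast [Nat.cast_sub hrk]
  ring

lemma cast_hvol (E : Multiset (Finset V)) (S : Finset V) : ((hvol E S : ℕ) : ℝ) = volR E S := by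
  unfold hvol volR dR; push_cast; rfl

lemma cheeger_nonneg (E : Multiset (Finset V)) (k : ℕ) : 0 ≤ cheeger E k := by
  apply Real.sInf_nonneg
  rintro x ⟨S, -, -, rfl⟩
  positivity

lemma cheeger_mul_le {k : ℕ} {E : Multiset (Finset V)} (hk : ∀ e ∈ E, e.card = k)
    (hdegpos : ∀ v, 0 < hdeg E v) {S : Finset V} (hS : S.Nonempty) (hS' : S ≠ Finset.univ)
    (hvle : volR E S ≤ volR E Sᶜ) :
    cheeger E k * volR E S ≤ cutW E S := by
  have hvpos : 0 < volR E S := volR_pos E hdegpos hS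
  have hmin : ((min (hvol E S) (hvol E Sᶜ) : ℕ) : ℝ) = volR E S := by
    rw [Nat.cast_min, cast_hvol, cast_hvol, min_eq_left hvle]
  have hmem : (((∑ r ∈ Finset.Icc 1 (k - 1), Multiset.card (Er E S r) * r * (k - r) : ℕ) : ℝ) /
      ((min (hvol E S) (hvol E Sᶜ) : ℕ) : ℝ)) ∈ {x : ℝ | ∃ S : Finset V, S.Nonempty ∧
        S ≠ Finset.univ ∧
        x = ((∑ r ∈ Finset.Icc 1 (k - 1), Multiset.card (Er E S r) * r * (k - r) : ℕ) : ℝ) /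
          (min (hvol E S) (hvol E Sᶜ) : ℕ)} := ⟨S, hS, hS', rfl⟩
  have hbdd : BddBelow {x : ℝ | ∃ S : Finset V, S.Nonempty ∧ S ≠ Finset.univ ∧
      x = ((∑ r ∈ Finset.Icc 1 (k - 1), Multiset.card (Er E S r) * r * (k - r) : ℕ) : ℝ) /
        (min (hvol E S) (hvol E Sᶜ) : ℕ)} := by
    refine ⟨0, ?_⟩
    rintro x ⟨S, -, -, rfl⟩
    positivity
  have hle := csInf_le hbdd hmem
  unfold cheeger
  calc sInf _ * volR E S ≤ _ * volR E S := mul_le_mul_of_nonneg_right hle (le_of_lt hvpos)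
    _ = cutW E S := by
        rw [hmin, div_mul_cancel₀ _ (ne_of_gt hvpos), icc_cast, icc_cut E hk S, cutW_eq hk]

lemma map_const_mul (E : Multiset (Finset V)) (c : ℝ) (A : Finset V → ℝ) :
    (E.map (fun e => c * A e)).sum = c * (E.map A).sum := by
  induction E using Multiset.induction_on with
  | empty => simp
  | cons e E ih => simp only [Multiset.map_cons, Multiset.sum_cons, ih]; ring

lemma map_sub_sum (E : Multiset (Finset V)) (A B : Finset V → ℝ) :
    (E.map (fun e => A e - B e)).sum = (E.map A).sum - (E.map B).sum := by
  induction E using Multiset.induction_on with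
  | empty => simp
  | cons e E ih => simp only [Multiset.map_cons, Multiset.sum_cons, ih]; ring

/-- The key identity: `2 * (numerator of RQ) = 2k * Den - Num`. -/
lemma rq_identity {k : ℕ} {E : Multiset (Finset V)} (hk : ∀ e ∈ E, e.card = k) (f : V → ℝ) :
    2 * (E.map (fun e => (∑ v ∈ e, f v) ^ 2)).sum = 2 * k * Den E f - Num E f := by
  have hNum : Num E f
      = (E.map (fun e => ∑ u ∈ e, ∑ v ∈ e, (f u - f v) ^ 2)).sum := by
    rw [pair_sum E (fun u v => (f u - f v)^2) (fun u => by ring)]; rfl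
  have hper : ∀ e ∈ E, ∑ u ∈ e, ∑ v ∈ e, (f u - f v) ^ 2
      = 2 * (k : ℝ) * (∑ v ∈ e, f v ^ 2) - 2 * (∑ v ∈ e, f v) ^ 2 := by
    intro e he
    have inner : ∀ u, ∑ v ∈ e, (f u - f v) ^ 2
        = e.card * f u ^ 2 - 2 * f u * (∑ v ∈ e, f v) + ∑ v ∈ e, f v ^ 2 := by
      intro u
      have : ∀ v, (f u - f v) ^ 2 = f u ^ 2 - 2 * f u * f v + f v ^ 2 := fun v => by ring
      rw [Finset.sum_congr rfl fun v _ => this v]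
      rw [Finset.sum_add_distrib, Finset.sum_sub_distrib, Finset.sum_const, ← Finset.mul_sum]
      simp [mul_comm]
    rw [Finset.sum_congr rfl fun u _ => inner u, Finset.sum_add_distrib, Finset.sum_sub_distrib,
      Finset.sum_const, ← Finset.sum_mul, ← Finset.mul_sum, ← Finset.mul_sum, hk e he]
    push_cast
    ring
  have : (E.map (fun e => ∑ u ∈ e, ∑ v ∈ e, (f u - f v) ^ 2)).sum
      = (E.map (fun e => 2 * (k : ℝ) * (∑ v ∈ e, f v ^ 2) - 2 * (∑ v ∈ e, f v) ^ 2)).sum := by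
    congr 1; exact Multiset.map_congr rfl hper
  rw [hNum, this, map_sub_sum]
  have h2 : (E.map (fun e => 2 * (k : ℝ) * (∑ v ∈ e, f v ^ 2))).sum
      = 2 * (k:ℝ) * (E.map (fun e => (∑ v ∈ e, f v ^ 2))).sum :=
    map_const_mul E _ _
  have h3 : (E.map (fun e => 2 * ((∑ v ∈ e, f v) ^ 2))).sum
      = 2 * (E.map (fun e => (∑ v ∈ e, f v) ^ 2)).sum :=
    map_const_mul E _ _
  have h4 : (E.map (fun e => (∑ v ∈ e, f v ^ 2))).sum = Den E f := edge_sum E (fun v => f v ^ 2)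
  rw [h2, h3, h4]
  ring


/-- The hard Cheeger estimate for a nonnegative function with small support. -/
lemma hard {k : ℕ} {E : Multiset (Finset V)} (hk : ∀ e ∈ E, e.card = k) (hk1 : 1 ≤ k)
    (hdegpos : ∀ v, 0 < hdeg E v) (g : V → ℝ) (hg : ∀ v, 0 ≤ g v)
    (hsupp : 2 * volR E (Finset.univ.filter fun v => g v ≠ 0) ≤ volR E Finset.univ) :
    cheeger E k ^ 2 * Den E g ≤ ((k : ℝ) - 1) * Num E g := by
  classical
  set h := cheeger E k with hh
  have h0 : 0 ≤ h := cheeger_nonneg E k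
  set n := Fintype.card V with hn
  set ν : Fin n ≃ V := (Tuple.sort (fun i => -(g ((Fintype.equivFin V).symm i)) ^ 2)).trans
    (Fintype.equivFin V).symm with hν
  set t : Fin n → ℝ := fun i => g (ν i) ^ 2 with ht
  have t_nonneg : ∀ i, 0 ≤ t i := fun i => sq_nonneg _
  have t_anti : ∀ i j : Fin n, i ≤ j → t j ≤ t i := by
    intro i j hij
    have := Tuple.monotone_sort (fun i => -(g ((Fintype.equivFin V).symm i)) ^ 2) hij
    simp only [Function.comp_apply] at this
    have : -(g ((Fintype.equivFin V).symm ((Tuple.sort _) i))) ^ 2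
        ≤ -(g ((Fintype.equivFin V).symm ((Tuple.sort _) j))) ^ 2 := this
    simp only [ht, hν, Equiv.trans_apply]
    linarith
  set T : ℕ → ℝ := fun m => if hm : m < n then t ⟨m, hm⟩ else 0 with hT
  have T_nonneg : ∀ m, 0 ≤ T m := by
    intro m
    by_cases hm : m < n
    · simpa [hT, hm] using t_nonneg ⟨m, hm⟩
    · simp [hT, hm]
  have T_eq : ∀ i : Fin n, T (i : ℕ) = t i := by
    intro i; simp [hT, i.isLt]
  have T_anti : ∀ a b : ℕ, a ≤ b → T b ≤ T a := by
    intro a b hab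
    by_cases hb : b < n
    · have ha : a < n := lt_of_le_of_lt hab hb
      simpa [hT, ha, hb] using t_anti ⟨a, ha⟩ ⟨b, hb⟩ (Fin.mk_le_mk.mpr hab)
    · by_cases ha : a < n <;> simp [hT, ha, hb, t_nonneg]
  set δ : ℕ → ℝ := fun m => T m - T (m + 1) with hδ
  have δ_nonneg : ∀ m, 0 ≤ δ m := fun m => sub_nonneg.2 (T_anti m (m+1) (Nat.le_succ m))
  have tele : ∀ a b : ℕ, a ≤ b → b ≤ n → ∑ j ∈ Finset.Ico a b, δ j = T a - T b := by
    intro a b hab _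
    simp only [hδ]
    rw [Finset.sum_Ico_eq_sub _ hab, Finset.sum_range_sub' T, Finset.sum_range_sub' T]
    ring
  have Tn : T n = 0 := by simp [hT]
  -- level sets
  set S : ℕ → Finset V := fun m => Finset.univ.filter (fun x => ((ν.symm x : Fin n) : ℕ) ≤ m)
    with hS
  have memS : ∀ (m : ℕ) (i : Fin n), ν i ∈ S m ↔ (i : ℕ) ≤ m := by
    intro m i
    simp [hS, Equiv.symm_apply_apply]
  -- volume identity
  have volS : ∀ m, volR E (S m) = ∑ i : Fin n, (if (i : ℕ) ≤ m then dR E (ν i) else 0) := by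
    intro m
    have e1 : volR E (S m) = ∑ x : V, (if ((ν.symm x : Fin n) : ℕ) ≤ m then dR E x else 0) := by
      simp only [volR, hS, Finset.sum_filter]
    rw [e1, ← Equiv.sum_comp ν (fun x => if ((ν.symm x : Fin n) : ℕ) ≤ m then dR E x else 0)]
    exact Finset.sum_congr rfl (fun i _ => by rw [Equiv.symm_apply_apply])
  have denId : Den E g = ∑ j ∈ Finset.range n, δ j * volR E (S j) := by
    unfold Den
    rw [← Equiv.sum_comp ν (fun v => dR E v * g v ^ 2)]
    have step1 : ∀ i : Fin n, dR E (ν i) * g (ν i) ^ 2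
        = ∑ j ∈ Finset.range n, (if (i : ℕ) ≤ j then dR E (ν i) * δ j else 0) := by
      intro i
      have : ∑ j ∈ Finset.range n, (if (i : ℕ) ≤ j then dR E (ν i) * δ j else 0)
          = ∑ j ∈ Finset.Ico (i : ℕ) n, dR E (ν i) * δ j := by
        rw [← Finset.sum_filter]
        congr 1
        ext j
        simp [Finset.mem_Ico, Finset.mem_filter, Finset.mem_range, and_comm]
      rw [this, ← Finset.mul_sum, tele (i : ℕ) n i.isLt.le le_rfl, Tn, T_eq]
      ring
    rw [Finset.sum_congr rfl fun i _ => step1 i, Finset.sum_comm]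
    refine Finset.sum_congr rfl (fun j _ => ?_)
    rw [volS j, Finset.mul_sum]
    refine Finset.sum_congr rfl (fun i _ => ?_)
    split <;> ring
  -- the quantity M and its co-area identity
  set M : ℝ := ∑ u, ∑ v, w E u v * |g u ^ 2 - g v ^ 2| with hM
  have Mre : M = ∑ a : Fin n, ∑ b : Fin n, w E (ν a) (ν b) * |t a - t b| := by
    simp only [hM, ht]
    rw [← Equiv.sum_comp ν (fun u => ∑ v, w E u v * |g u ^ 2 - g v ^ 2|)]
    refine Finset.sum_congr rfl (fun a _ => ?_)
    rw [← Equiv.sum_comp ν (fun v => w E (ν a) v * |g (ν a) ^ 2 - g v ^ 2|)]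
  have key : ∀ a b : Fin n, (a:ℕ) ≤ (b:ℕ) →
      |t a - t b| = ∑ j ∈ Finset.range n,
        δ j * ((if (a:ℕ) ≤ j ∧ ¬ (b:ℕ) ≤ j then (1:ℝ) else 0)
          + (if (b:ℕ) ≤ j ∧ ¬ (a:ℕ) ≤ j then (1:ℝ) else 0)) := by
    intro a b hab
    have h1 : |t a - t b| = T (a:ℕ) - T (b:ℕ) := by
      rw [T_eq, T_eq, abs_of_nonneg (sub_nonneg.2 (t_anti a b (Fin.le_def.mpr hab)))]
    have h2 : ∀ j ∈ Finset.range n,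
        δ j * ((if (a:ℕ) ≤ j ∧ ¬ (b:ℕ) ≤ j then (1:ℝ) else 0)
          + (if (b:ℕ) ≤ j ∧ ¬ (a:ℕ) ≤ j then (1:ℝ) else 0))
        = (if j ∈ Finset.Ico (a:ℕ) (b:ℕ) then δ j else 0) := by
      intro j _
      by_cases hja : (a:ℕ) ≤ j <;> by_cases hjb : (b:ℕ) ≤ j
      · simp [Finset.mem_Ico, hja, hjb, not_lt.mpr hjb]
      · simp [Finset.mem_Ico, hja, hjb, lt_of_not_ge hjb]
      · exact absurd (le_trans hab hjb) hja
      · simp [Finset.mem_Ico, hja, hjb]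
    rw [Finset.sum_congr rfl h2, Finset.sum_ite_mem]
    have hsub2 : Finset.Ico (a:ℕ) (b:ℕ) ⊆ Finset.range n := by
      intro j hj
      rw [Finset.mem_range]
      exact lt_trans (Finset.mem_Ico.mp hj).2 b.isLt
    rw [Finset.inter_eq_right.mpr hsub2, tele (a:ℕ) (b:ℕ) hab (le_of_lt b.isLt), h1]
  have cutId : ∀ j : ℕ, ∑ a : Fin n, ∑ b : Fin n, w E (ν a) (ν b)
      * (if (a:ℕ) ≤ j ∧ ¬ (b:ℕ) ≤ j then (1:ℝ) else 0) = cutW E (S j) := by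
    intro j
    rw [← cutW_ind E (S j)]
    rw [← Equiv.sum_comp ν (fun u => ∑ v, w E u v *
      ((if u ∈ S j then (1:ℝ) else 0) * (if v ∈ S j then 0 else 1)))]
    refine Finset.sum_congr rfl (fun a _ => ?_)
    rw [← Equiv.sum_comp ν (fun v => w E (ν a) v *
      ((if ν a ∈ S j then (1:ℝ) else 0) * (if v ∈ S j then 0 else 1)))]
    refine Finset.sum_congr rfl (fun b _ => ?_)
    congr 1
    by_cases ha : (a:ℕ) ≤ j <;> by_cases hb : (b:ℕ) ≤ j <;>
      simp [ha, hb, (memS j a).mpr, (memS j b).mpr, memS]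
  have MId : M = 2 * ∑ j ∈ Finset.range n, δ j * cutW E (S j) := by
    have keyAll : ∀ a b : Fin n, |t a - t b| = ∑ j ∈ Finset.range n,
        δ j * ((if (a:ℕ) ≤ j ∧ ¬ (b:ℕ) ≤ j then (1:ℝ) else 0)
          + (if (b:ℕ) ≤ j ∧ ¬ (a:ℕ) ≤ j then (1:ℝ) else 0)) := by
      intro a b
      rcases le_total (a:ℕ) (b:ℕ) with hab | hba
      · exact key a b hab
      · rw [abs_sub_comm, key b a hba]
        exact Finset.sum_congr rfl fun j _ => by ring
    have step : ∀ a b : Fin n, w E (ν a) (ν b) * |t a - t b|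
        = ∑ j ∈ Finset.range n,
          (δ j * (w E (ν a) (ν b) * (if (a:ℕ) ≤ j ∧ ¬ (b:ℕ) ≤ j then (1:ℝ) else 0))
            + δ j * (w E (ν a) (ν b) * (if (b:ℕ) ≤ j ∧ ¬ (a:ℕ) ≤ j then (1:ℝ) else 0))) := by
      intro a b
      rw [keyAll a b, Finset.mul_sum]
      exact Finset.sum_congr rfl fun j _ => by ring
    rw [Mre, Finset.sum_congr rfl (fun a _ => Finset.sum_congr rfl fun b _ => step a b),
      Finset.sum_congr rfl (fun a (_ : a ∈ Finset.univ) => Finset.sum_comm), Finset.sum_comm,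
      Finset.mul_sum]
    refine Finset.sum_congr rfl fun j _ => ?_
    have swapId : ∑ a : Fin n, ∑ b : Fin n, w E (ν a) (ν b)
        * (if (b:ℕ) ≤ j ∧ ¬ (a:ℕ) ≤ j then (1:ℝ) else 0) = cutW E (S j) := by
      rw [Finset.sum_comm, ← cutId j]
      exact Finset.sum_congr rfl fun b _ => Finset.sum_congr rfl fun a _ => by
        rw [w_symm]
    calc ∑ a : Fin n, ∑ b : Fin n,
          (δ j * (w E (ν a) (ν b) * (if (a:ℕ) ≤ j ∧ ¬ (b:ℕ) ≤ j then (1:ℝ) else 0))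
            + δ j * (w E (ν a) (ν b) * (if (b:ℕ) ≤ j ∧ ¬ (a:ℕ) ≤ j then (1:ℝ) else 0)))
        = δ j * (∑ a : Fin n, ∑ b : Fin n, w E (ν a) (ν b)
            * (if (a:ℕ) ≤ j ∧ ¬ (b:ℕ) ≤ j then (1:ℝ) else 0))
          + δ j * (∑ a : Fin n, ∑ b : Fin n, w E (ν a) (ν b)
            * (if (b:ℕ) ≤ j ∧ ¬ (a:ℕ) ≤ j then (1:ℝ) else 0)) := by
          rw [Finset.mul_sum, Finset.mul_sum, ← Finset.sum_add_distrib]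
          refine Finset.sum_congr rfl fun a _ => ?_
          rw [Finset.mul_sum, Finset.mul_sum, ← Finset.sum_add_distrib]
      _ = 2 * (δ j * cutW E (S j)) := by rw [cutId j, swapId]; ring
  -- lower bound for M
  have cutB : ∀ j ∈ Finset.range n, δ j * (h * volR E (S j)) ≤ δ j * cutW E (S j) := by
    intro j _
    rcases eq_or_lt_of_le (δ_nonneg j) with hδ0 | hδpos
    · rw [← hδ0]; simp
    · refine mul_le_mul_of_nonneg_left ?_ (le_of_lt hδpos)
      have hTj : 0 < T j := by
        have h1 : T (j+1) < T j := by
          have : 0 < T j - T (j+1) := by simpa [hδ] using hδpos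
          linarith
        linarith [T_nonneg (j+1)]
      have hjn : j < n := by
        by_contra hjn
        push_neg at hjn
        linarith [le_trans (T_anti n j hjn) (le_of_eq Tn)]
      have hsub : S j ⊆ Finset.univ.filter (fun v => g v ≠ 0) := by
        intro x hx
        simp only [hS, Finset.mem_filter] at hx ⊢
        refine ⟨Finset.mem_univ x, ?_⟩
        have hle : ((ν.symm x : Fin n):ℕ) ≤ j := hx.2
        have h2 : T j ≤ t (ν.symm x) := by
          rw [← T_eq (ν.symm x)]; exact T_anti _ _ hle
        have h3 : 0 < g x ^ 2 := by
          have := lt_of_lt_of_le hTj h2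
          simpa [ht, Equiv.apply_symm_apply] using this
        intro h0x
        rw [h0x] at h3
        simp at h3
      have hSne : (S j).Nonempty := ⟨ν ⟨j, hjn⟩, by simp [hS, Equiv.symm_apply_apply]⟩
      have hvol2 : 2 * volR E (S j) ≤ volR E Finset.univ :=
        le_trans (by linarith [volR_mono E hsub]) hsupp
      have htot : volR E (S j) + volR E (S j)ᶜ = volR E Finset.univ := by
        unfold volR
        exact Finset.sum_add_sum_compl (S j) (dR E)
      have hcompl : volR E (S j) ≤ volR E (S j)ᶜ := by linarith
      have hSneq : S j ≠ Finset.univ := by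
        intro hequ
        have hcem : (S j)ᶜ = ∅ := by rw [hequ]; exact Finset.compl_univ
        have h1 : volR E (S j)ᶜ = 0 := by rw [hcem]; simp [volR]
        have := volR_pos E hdegpos hSne
        rw [h1] at hcompl
        linarith
      exact cheeger_mul_le hk hdegpos hSne hSneq hcompl
  have Mlb : 2 * (h * Den E g) ≤ M := by
    rw [MId, denId]
    have hj2 : ∀ j ∈ Finset.range n,
        2 * (h * (δ j * volR E (S j))) ≤ 2 * (δ j * cutW E (S j)) := by
      intro j hj
      calc 2 * (h * (δ j * volR E (S j))) = 2 * (δ j * (h * volR E (S j))) := by ring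
        _ ≤ 2 * (δ j * cutW E (S j)) := by linarith [cutB j hj]
    calc 2 * (h * ∑ j ∈ Finset.range n, δ j * volR E (S j))
        = ∑ j ∈ Finset.range n, 2 * (h * (δ j * volR E (S j))) := by
          rw [Finset.mul_sum, Finset.mul_sum]
      _ ≤ ∑ j ∈ Finset.range n, 2 * (δ j * cutW E (S j)) := Finset.sum_le_sum hj2
      _ = 2 * ∑ j ∈ Finset.range n, δ j * cutW E (S j) := by rw [Finset.mul_sum]
  -- Cauchy–Schwarz
  have CS : M ^ 2 ≤ Num E g * (∑ u, ∑ v, w E u v * (g u + g v) ^ 2) := by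
    have hM2 : M = ∑ p ∈ Finset.univ ×ˢ Finset.univ,
        (Real.sqrt (w E p.1 p.2) * |g p.1 - g p.2|)
          * (Real.sqrt (w E p.1 p.2) * (g p.1 + g p.2)) := by
      rw [hM, Finset.sum_product]
      refine Finset.sum_congr rfl fun u _ => Finset.sum_congr rfl fun v _ => ?_
      rw [mul_mul_mul_comm, Real.mul_self_sqrt (w_nonneg E u v)]
      congr 1
      rw [show g u ^ 2 - g v ^ 2 = (g u - g v) * (g u + g v) by ring, abs_mul,
        abs_of_nonneg (add_nonneg (hg u) (hg v))]
    have hN2 : Num E g = ∑ p ∈ Finset.univ ×ˢ Finset.univ,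
        (Real.sqrt (w E p.1 p.2) * |g p.1 - g p.2|) ^ 2 := by
      unfold Num
      rw [Finset.sum_product]
      refine Finset.sum_congr rfl fun u _ => Finset.sum_congr rfl fun v _ => ?_
      rw [mul_pow, Real.sq_sqrt (w_nonneg E u v), sq_abs]
    have hQ2 : (∑ u, ∑ v, w E u v * (g u + g v) ^ 2) = ∑ p ∈ Finset.univ ×ˢ Finset.univ,
        (Real.sqrt (w E p.1 p.2) * (g p.1 + g p.2)) ^ 2 := by
      rw [Finset.sum_product]
      refine Finset.sum_congr rfl fun u _ => Finset.sum_congr rfl fun v _ => ?_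
      rw [mul_pow, Real.sq_sqrt (w_nonneg E u v)]
    rw [hM2, hN2, hQ2]
    exact Finset.sum_mul_sq_le_sq_mul_sq _ _ _
  have B2 : (∑ u, ∑ v, w E u v * (g u + g v) ^ 2) ≤ 4 * ((k:ℝ) - 1) * Den E g := by
    have pt : ∀ u v : V, w E u v * (g u + g v) ^ 2
        ≤ 2 * (w E u v * g u ^ 2) + 2 * (w E u v * g v ^ 2) := by
      intro u v
      have h1 : w E u v * (g u + g v) ^ 2 ≤ w E u v * (2 * g u ^ 2 + 2 * g v ^ 2) := by
        refine mul_le_mul_of_nonneg_left ?_ (w_nonneg E u v)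
        nlinarith [sq_nonneg (g u - g v)]
      linarith
    calc ∑ u, ∑ v, w E u v * (g u + g v) ^ 2
        ≤ ∑ u, ∑ v, (2 * (w E u v * g u ^ 2) + 2 * (w E u v * g v ^ 2)) :=
          Finset.sum_le_sum fun u _ => Finset.sum_le_sum fun v _ => pt u v
      _ = 4 * ((k:ℝ) - 1) * Den E g := by
          have split1 : ∑ u, ∑ v, (2 * (w E u v * g u ^ 2) + 2 * (w E u v * g v ^ 2))
              = (∑ u, ∑ v, 2 * (w E u v * g u ^ 2)) + (∑ u, ∑ v, 2 * (w E u v * g v ^ 2)) := by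
            rw [← Finset.sum_add_distrib]
            exact Finset.sum_congr rfl fun u _ => Finset.sum_add_distrib
          have p1 : (∑ u, ∑ v, 2 * (w E u v * g u ^ 2)) = 2 * ((k:ℝ) - 1) * Den E g := by
            have : ∀ u : V, ∑ v, 2 * (w E u v * g u ^ 2)
                = 2 * (((k:ℝ) - 1) * (dR E u * g u ^ 2)) := by
              intro u
              rw [show ∀ x : ℝ, 2 * (((k:ℝ)-1) * x) = 2 * ((k:ℝ)-1) * x from fun x => by ring]
              rw [show (2:ℝ) * ((k:ℝ)-1) * (dR E u * g u ^ 2)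
                = 2 * ((∑ v, w E u v) * g u ^ 2) from by rw [row_sum hk u]; ring]
              rw [Finset.sum_mul, Finset.mul_sum]
            rw [Finset.sum_congr rfl fun u _ => this u]
            unfold Den
            rw [Finset.mul_sum]
            refine Finset.sum_congr rfl fun u _ => by ring
          have p2 : (∑ u, ∑ v, 2 * (w E u v * g v ^ 2)) = 2 * ((k:ℝ) - 1) * Den E g := by
            rw [Finset.sum_comm]
            have : ∀ v : V, ∑ u, 2 * (w E u v * g v ^ 2)
                = 2 * (((k:ℝ) - 1) * (dR E v * g v ^ 2)) := by
              intro v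
              rw [show (2:ℝ) * (((k:ℝ)-1) * (dR E v * g v ^ 2))
                = 2 * ((∑ u, w E u v) * g v ^ 2) from by rw [col_sum hk v]; ring]
              rw [Finset.sum_mul, Finset.mul_sum]
            rw [Finset.sum_congr rfl fun v _ => this v]
            unfold Den
            rw [Finset.mul_sum]
            refine Finset.sum_congr rfl fun v _ => by ring
          rw [split1, p1, p2]
          ring
  -- conclude
  have hDen := Den_nonneg E g
  have hNum := Num_nonneg E g
  have hk1R : (0:ℝ) ≤ (k:ℝ) - 1 := by
    have : (1:ℝ) ≤ (k:ℝ) := by exact_mod_cast hk1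
    linarith
  rcases eq_or_lt_of_le hDen with hD0 | hDpos
  · rw [← hD0, mul_zero]
    exact mul_nonneg hk1R hNum
  · have sq1 : (2 * (h * Den E g)) ^ 2 ≤ M ^ 2 := by
      have h1 : 0 ≤ 2 * (h * Den E g) := by positivity
      exact pow_le_pow_left₀ h1 Mlb 2
    have c1 : Num E g * (∑ u, ∑ v, w E u v * (g u + g v) ^ 2)
        ≤ Num E g * (4 * ((k:ℝ) - 1) * Den E g) := mul_le_mul_of_nonneg_left B2 hNum
    have c2 : (2 * (h * Den E g)) ^ 2 ≤ Num E g * (4 * ((k:ℝ) - 1) * Den E g) :=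
      le_trans sq1 (le_trans CS c1)
    have c3 : h ^ 2 * Den E g * (4 * Den E g) ≤ ((k:ℝ) - 1) * Num E g * (4 * Den E g) := by
      nlinarith [c2]
    exact le_of_mul_le_mul_right c3 (by linarith)

/-- Existence of a weighted median. -/
lemma exists_median [Nonempty V] (E : Multiset (Finset V)) (f : V → ℝ) :
    ∃ c : ℝ, 2 * volR E (Finset.univ.filter fun v => c < f v) ≤ volR E Finset.univ ∧
      2 * volR E (Finset.univ.filter fun v => f v < c) ≤ volR E Finset.univ := by
  classical
  set C : Finset ℝ := Finset.univ.image f with hC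
  have hCne : C.Nonempty := ⟨f (Classical.arbitrary V), Finset.mem_image_of_mem f (Finset.mem_univ _)⟩
  set A : Finset ℝ := C.filter
    (fun c => volR E Finset.univ ≤ 2 * volR E (Finset.univ.filter fun v => f v ≤ c)) with hA
  have hAne : A.Nonempty := by
    refine ⟨C.max' hCne, Finset.mem_filter.mpr ⟨C.max'_mem hCne, ?_⟩⟩
    have : (Finset.univ.filter fun v => f v ≤ C.max' hCne) = Finset.univ := by
      refine Finset.filter_true_of_mem (fun v _ => ?_)
      exact C.le_max' (f v) (Finset.mem_image_of_mem f (Finset.mem_univ v))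
    rw [this]
    linarith [volR_nonneg E (Finset.univ : Finset V)]
  set c := A.min' hAne with hc
  have hcA : c ∈ A := A.min'_mem hAne
  have hcprop : volR E Finset.univ ≤ 2 * volR E (Finset.univ.filter fun v => f v ≤ c) :=
    (Finset.mem_filter.mp hcA).2
  refine ⟨c, ?_, ?_⟩
  · -- upper part
    have hcompl : (Finset.univ.filter fun v => c < f v)
        = (Finset.univ.filter fun v => f v ≤ c)ᶜ := by
      ext x
      simp [not_le]
    have htot : volR E (Finset.univ.filter fun v => f v ≤ c)
        + volR E (Finset.univ.filter fun v => f v ≤ c)ᶜ = volR E Finset.univ := by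
      unfold volR
      exact Finset.sum_add_sum_compl _ (dR E)
    rw [hcompl]
    linarith
  · -- lower part
    set B : Finset V := Finset.univ.filter (fun v => f v < c) with hB
    rcases B.eq_empty_or_nonempty with hBe | hBne
    · rw [hBe]
      simp only [volR, Finset.sum_empty, mul_zero]
      exact volR_nonneg E Finset.univ
    · have hBfne : (B.image f).Nonempty := hBne.image f
      set c' := (B.image f).max' hBfne with hc'
      obtain ⟨v₀, hv₀B, hv₀⟩ := Finset.mem_image.mp ((B.image f).max'_mem hBfne)
      rw [← hc'] at hv₀
      have hv₀lt : f v₀ < c := (Finset.mem_filter.mp hv₀B).2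
      have hc'lt : c' < c := by rw [← hv₀]; exact hv₀lt
      have hc'C : c' ∈ C := by
        rw [← hv₀]
        exact Finset.mem_image_of_mem f (Finset.mem_univ v₀)
      have hc'A : c' ∉ A := by
        intro hmem
        exact absurd (A.min'_le c' hmem) (not_le.mpr hc'lt)
      have hc'bad : ¬ (volR E Finset.univ
          ≤ 2 * volR E (Finset.univ.filter fun v => f v ≤ c')) := by
        intro hcontra
        exact hc'A (Finset.mem_filter.mpr ⟨hc'C, hcontra⟩)
      push_neg at hc'bad
      have hsub : B ⊆ Finset.univ.filter (fun v => f v ≤ c') := by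
        intro v hv
        refine Finset.mem_filter.mpr ⟨Finset.mem_univ v, ?_⟩
        exact (B.image f).le_max' (f v) (Finset.mem_image_of_mem f hv)
      have := volR_mono E hsub
      linarith

/-- The per-function estimate. -/
lemma per_fun [Nonempty V] {k : ℕ} {E : Multiset (Finset V)} (hk : ∀ e ∈ E, e.card = k)
    (hk1 : 1 ≤ k) (hdegpos : ∀ v, 0 < hdeg E v) (f : V → ℝ)
    (horth : ∑ v, (hdeg E v : ℝ) * f v = 0) :
    cheeger E k ^ 2 * Den E f ≤ ((k : ℝ) - 1) * Num E f := by
  classical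
  obtain ⟨c, hupper, hlower⟩ := exists_median E f
  set g : V → ℝ := fun v => f v - c with hg
  set gp : V → ℝ := fun v => max (g v) 0 with hgp
  set gm : V → ℝ := fun v => max (-g v) 0 with hgm
  have hk1R : (0:ℝ) ≤ (k:ℝ) - 1 := by
    have : (1:ℝ) ≤ (k:ℝ) := by exact_mod_cast hk1
    linarith
  -- Den f ≤ Den g
  have hDfg : Den E f ≤ Den E g := by
    have expand : ∀ v, dR E v * g v ^ 2
        = dR E v * f v ^ 2 - 2 * c * (dR E v * f v) + c ^ 2 * dR E v := by
      intro v; simp only [hg]; ring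
    have : Den E g = Den E f - 2 * c * (∑ v, dR E v * f v) + c ^ 2 * volR E Finset.univ := by
      unfold Den volR
      rw [Finset.sum_congr rfl fun v _ => expand v, Finset.sum_add_distrib,
        Finset.sum_sub_distrib, ← Finset.mul_sum, ← Finset.mul_sum]
    rw [this, show (∑ v, dR E v * f v) = 0 from horth]
    have := volR_nonneg E (Finset.univ : Finset V)
    nlinarith
  have hNfg : Num E g = Num E f := by
    unfold Num
    refine Finset.sum_congr rfl fun u _ => Finset.sum_congr rfl fun v _ => ?_
    simp only [hg]; ring_nf
  -- splitting
  have hDsplit : Den E g = Den E gp + Den E gm := by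
    unfold Den
    rw [← Finset.sum_add_distrib]
    refine Finset.sum_congr rfl fun v _ => ?_
    simp only [hgp, hgm]
    rcases le_total (g v) 0 with hv | hv
    · rw [max_eq_right hv, max_eq_left (neg_nonneg.mpr hv)]; ring
    · rw [max_eq_left hv, max_eq_right (neg_nonpos.mpr hv)]; ring
  have hNsplit : Num E gp + Num E gm ≤ Num E g := by
    unfold Num
    rw [← Finset.sum_add_distrib]
    refine Finset.sum_le_sum fun u _ => ?_
    rw [← Finset.sum_add_distrib]
    refine Finset.sum_le_sum fun v _ => ?_
    rw [← mul_add]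
    refine mul_le_mul_of_nonneg_left ?_ (w_nonneg E u v)
    simp only [hgp, hgm]
    rcases le_total (g u) 0 with hu | hu <;> rcases le_total (g v) 0 with hv | hv
    · rw [max_eq_right hu, max_eq_right hv, max_eq_left (neg_nonneg.mpr hu),
        max_eq_left (neg_nonneg.mpr hv)]
      nlinarith
    · rw [max_eq_right hu, max_eq_left hv, max_eq_left (neg_nonneg.mpr hu),
        max_eq_right (neg_nonpos.mpr hv)]
      nlinarith [mul_nonneg (neg_nonneg.mpr hu) hv]
    · rw [max_eq_left hu, max_eq_right hv, max_eq_right (neg_nonpos.mpr hu),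
        max_eq_left (neg_nonneg.mpr hv)]
      nlinarith [mul_nonneg hu (neg_nonneg.mpr hv)]
    · rw [max_eq_left hu, max_eq_left hv, max_eq_right (neg_nonpos.mpr hu),
        max_eq_right (neg_nonpos.mpr hv)]
      nlinarith
  -- support bounds
  have hsuppp : 2 * volR E (Finset.univ.filter fun v => gp v ≠ 0) ≤ volR E Finset.univ := by
    refine le_trans ?_ hupper
    have hsub : (Finset.univ.filter fun v => gp v ≠ 0)
        ⊆ (Finset.univ.filter fun v => c < f v) := by
      intro v hv
      simp only [Finset.mem_filter, hgp, hg] at hv ⊢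
      refine ⟨Finset.mem_univ v, ?_⟩
      rcases le_or_gt (f v) c with hle | hlt
      · exact absurd (max_eq_right (by linarith : f v - c ≤ 0)) hv.2
      · exact hlt
    linarith [volR_mono E hsub]
  have hsuppm : 2 * volR E (Finset.univ.filter fun v => gm v ≠ 0) ≤ volR E Finset.univ := by
    refine le_trans ?_ hlower
    have hsub : (Finset.univ.filter fun v => gm v ≠ 0)
        ⊆ (Finset.univ.filter fun v => f v < c) := by
      intro v hv
      simp only [Finset.mem_filter, hgm, hg] at hv ⊢
      refine ⟨Finset.mem_univ v, ?_⟩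
      rcases le_or_gt c (f v) with hle | hlt
      · exact absurd (max_eq_right (by linarith : -(f v - c) ≤ 0)) hv.2
      · exact hlt
    linarith [volR_mono E hsub]
  have hp := hard hk hk1 hdegpos gp (fun v => le_max_right _ _) hsuppp
  have hm := hard hk hk1 hdegpos gm (fun v => le_max_right _ _) hsuppm
  have h2 : cheeger E k ^ 2 * Den E f ≤ cheeger E k ^ 2 * Den E g :=
    mul_le_mul_of_nonneg_left hDfg (sq_nonneg _)
  have h3 : ((k:ℝ) - 1) * (Num E gp + Num E gm) ≤ ((k:ℝ) - 1) * Num E g :=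
    mul_le_mul_of_nonneg_left hNsplit hk1R
  calc cheeger E k ^ 2 * Den E f ≤ cheeger E k ^ 2 * Den E g := h2
    _ = cheeger E k ^ 2 * Den E gp + cheeger E k ^ 2 * Den E gm := by rw [hDsplit]; ring
    _ ≤ ((k:ℝ) - 1) * Num E gp + ((k:ℝ) - 1) * Num E gm := add_le_add hp hm
    _ = ((k:ℝ) - 1) * (Num E gp + Num E gm) := by ring
    _ ≤ ((k:ℝ) - 1) * Num E g := h3
    _ = ((k:ℝ) - 1) * Num E f := by rw [hNfg]

end S7

theorem stmt7 {V : Type*} [Fintype V] [DecidableEq V] [Nonempty V]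
    (E : Multiset (Finset V)) (k : ℕ)
    (hk : ∀ e ∈ E, e.card = k) (hconn : HConnected E) (hdegpos : ∀ v, 0 < hdeg E v)
    (hass : ∀ v : V, hdeg E v ≤ ∑ w ∈ Finset.univ.erase v, hdeg E w) :
    (k : ℝ) - lamSecond E ≥ cheeger E k ^ 2 / (2 * ((k : ℝ) - 1)) := by
  classical
  obtain ⟨v0⟩ := (inferInstance : Nonempty V)
  have hk1 : 1 ≤ k := by
    obtain ⟨e, heE, hve⟩ := Multiset.countP_pos.mp (hdegpos v0)
    have hcard : 0 < e.card := Finset.card_pos.mpr ⟨v0, hve⟩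
    rwa [hk e heE] at hcard
  have hk1R : (1:ℝ) ≤ (k:ℝ) := by exact_mod_cast hk1
  have h0 : 0 ≤ cheeger E k := S7.cheeger_nonneg E k
  have hub : ∀ x ∈ {x : ℝ | ∃ f : V → ℝ, f ≠ 0 ∧ (∑ v, (hdeg E v : ℝ) * f v = 0) ∧ RQ E f = x},
      x ≤ (k : ℝ) - cheeger E k ^ 2 / (2 * ((k:ℝ) - 1)) := by
    rintro x ⟨f, hf0, horth, rfl⟩
    obtain ⟨v1, hv1⟩ := Function.ne_iff.mp hf0
    have hDpos : 0 < S7.Den E f := by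
      have hterm : 0 < S7.dR E v1 * f v1 ^ 2 := by
        refine mul_pos ?_ (lt_of_le_of_ne (sq_nonneg _) (Ne.symm (pow_ne_zero 2 hv1)))
        unfold S7.dR
        exact_mod_cast hdegpos v1
      exact lt_of_lt_of_le hterm (Finset.single_le_sum
        (fun v _ => mul_nonneg (S7.dR_nonneg E v) (sq_nonneg _)) (Finset.mem_univ v1))
    have horth' : ∑ v, S7.dR E v * f v = 0 := horth
    have hkey := S7.per_fun hk hk1 hdegpos f horth'
    have hid := S7.rq_identity hk f
    have hNum0 := S7.Num_nonneg E f
    have hRQ : RQ E f = (E.map (fun e => (∑ v ∈ e, f v) ^ 2)).sum / S7.Den E f := rfl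
    rcases eq_or_lt_of_le hk1R with hkeq | hklt
    · have hzero : 2 * ((k:ℝ) - 1) = 0 := by rw [← hkeq]; ring
      rw [hzero, div_zero, sub_zero, hRQ, div_le_iff₀ hDpos]
      nlinarith [hid, hNum0]
    · have hpos : 0 < 2 * ((k:ℝ) - 1) := by linarith
      rw [hRQ, div_le_iff₀ hDpos]
      have hdiv : cheeger E k ^ 2 / (2 * ((k:ℝ)-1)) * S7.Den E f ≤ S7.Num E f / 2 := by
        rw [div_mul_eq_mul_div, div_le_div_iff₀ hpos (by norm_num : (0:ℝ) < 2)]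
        nlinarith [hkey]
      nlinarith [hid, hdiv]
  by_cases hsub : ∃ v1 v2 : V, v1 ≠ v2
  · obtain ⟨v1, v2, hne⟩ := hsub
    have hd1 : 0 < S7.dR E v1 := by unfold S7.dR; exact_mod_cast hdegpos v1
    have hd2 : 0 < S7.dR E v2 := by unfold S7.dR; exact_mod_cast hdegpos v2
    set f0 : V → ℝ := fun v => if v = v1 then S7.dR E v2
      else if v = v2 then -(S7.dR E v1) else 0 with hf0d
    have hne0 : f0 ≠ 0 := by
      intro hcontra
      have h1 := congrFun hcontra v1
      simp only [hf0d, if_pos rfl, Pi.zero_apply] at h1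
      linarith
    have horth0 : ∑ v, (hdeg E v : ℝ) * f0 v = 0 := by
      have hpt : ∀ v, (hdeg E v : ℝ) * f0 v
          = (if v = v1 then S7.dR E v1 * S7.dR E v2 else 0)
            - (if v = v2 then S7.dR E v2 * S7.dR E v1 else 0) := by
        intro v
        simp only [hf0d]
        rcases eq_or_ne v v1 with h1 | h1
        · subst h1
          rw [if_pos rfl, if_pos rfl, if_neg hne]
          unfold S7.dR
          ring
        · rw [if_neg h1, if_neg h1]
          rcases eq_or_ne v v2 with h2 | h2
          · subst h2
            rw [if_pos rfl, if_pos rfl]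
            unfold S7.dR
            ring
          · rw [if_neg h2, if_neg h2]
            ring
      rw [Finset.sum_congr rfl fun v _ => hpt v, Finset.sum_sub_distrib,
        Finset.sum_ite_eq' Finset.univ v1, Finset.sum_ite_eq' Finset.univ v2,
        if_pos (Finset.mem_univ v1), if_pos (Finset.mem_univ v2)]
      ring
    have hsup : lamSecond E ≤ (k : ℝ) - cheeger E k ^ 2 / (2 * ((k:ℝ) - 1)) :=
      csSup_le ⟨RQ E f0, f0, hne0, horth0, rfl⟩ hub
    linarith
  · push_neg at hsub
    have hL : lamSecond E = 0 := by
      unfold lamSecond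
      convert Real.sSup_empty using 2
      rw [Set.eq_empty_iff_forall_notMem]
      rintro x ⟨f, hf0, horth, -⟩
      apply hf0
      funext v
      have huniv : (Finset.univ : Finset V) = {v} := by
        ext u
        simp [hsub u v]
      rw [huniv, Finset.sum_singleton] at horth
      have hdne : (hdeg E v : ℝ) ≠ 0 := by
        have h := hdegpos v
        exact_mod_cast Nat.pos_iff_ne_zero.mp h
      have := mul_eq_zero.mp horth
      simp only [Pi.zero_apply]
      tauto
    have hC : cheeger E k = 0 := by
      unfold cheeger
      convert Real.sInf_empty using 2
      rw [Set.eq_empty_iff_forall_notMem]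
      rintro x ⟨S, hSne, hSuniv, -⟩
      apply hSuniv
      obtain ⟨sv, hs⟩ := hSne
      ext u
      simp only [Finset.mem_univ, iff_true]
      rw [hsub u sv]
      exact hs
    rw [hL, hC]
    rw [sub_zero]
    rw [zero_pow (by norm_num : 2 ≠ 0), zero_div]
    positivity
end

section
/- (Cheeger inequalities for uniform hypergraphs, combined) Let Γ be a connected k-uniform hypergraph with deg(v) ≤ Σ_{w≠v} deg(w) for all v. Then h²/(2(k−1)) ≤ k − λ_{n−1} ≤ 2(k−1)h. -/
open Finset

section CheegerAux
-- utilities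
variable {V : Type*} [Fintype V] [DecidableEq V]

/-- quadratic form denominator -/
noncomputable def Dq (E : Multiset (Finset V)) (f : V → ℝ) : ℝ :=
  ∑ v, (hdeg E v : ℝ) * f v ^ 2

noncomputable def Nq (E : Multiset (Finset V)) (f : V → ℝ) : ℝ :=
  (E.map (fun e => (∑ v ∈ e, f v) ^ 2)).sum

noncomputable def Pq (E : Multiset (Finset V)) (f : V → ℝ) : ℝ :=
  (E.map (fun e => ∑ v ∈ e, ∑ w ∈ e, (f v - f w) ^ 2)).sum

noncomputable def Mq (E : Multiset (Finset V)) (f : V → ℝ) : ℝ :=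
  (E.map (fun e => ∑ v ∈ e, ∑ w ∈ e, |f v ^ 2 - f w ^ 2|)).sum

/-- boundary count (unordered pairs weight) -/
def bnd {V : Type*} [DecidableEq V] (E : Multiset (Finset V)) (S : Finset V) : ℕ :=
  (E.map (fun e => (e ∩ S).card * (e.card - (e ∩ S).card))).sum

lemma degSum (E : Multiset (Finset V)) (g : V → ℝ) :
    (E.map (fun e => ∑ v ∈ e, g v)).sum = ∑ v, (hdeg E v : ℝ) * g v := by
  induction E using Multiset.induction_on with
  | empty => simp [hdeg]
  | cons a s ih =>
      simp only [Multiset.map_cons, Multiset.sum_cons, ih, hdeg, Multiset.countP_cons]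
      push_cast
      simp only [add_mul, Finset.sum_add_distrib, ite_mul, one_mul, zero_mul,
        Finset.sum_ite_mem, Finset.univ_inter]
      exact add_comm _ _

lemma edge_id (e : Finset V) (f : V → ℝ) :
    ∑ v ∈ e, ∑ w ∈ e, (f v - f w) ^ 2
      = 2 * e.card * (∑ v ∈ e, f v ^ 2) - 2 * (∑ v ∈ e, f v) ^ 2 := by
  have h1 : ∀ v ∈ e, ∑ w ∈ e, (f v - f w) ^ 2
      = e.card * f v ^ 2 - 2 * f v * (∑ w ∈ e, f w) + ∑ w ∈ e, f w ^ 2 := by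
    intro v _
    simp only [sub_sq, Finset.sum_add_distrib, Finset.sum_sub_distrib, Finset.sum_const,
      nsmul_eq_mul, Finset.mul_sum]
  rw [Finset.sum_congr rfl h1, Finset.sum_add_distrib, Finset.sum_sub_distrib,
    ← Finset.sum_mul, Finset.sum_const, nsmul_eq_mul]
  rw [← Finset.mul_sum, ← Finset.mul_sum]
  ring

lemma Pq_eq (E : Multiset (Finset V)) (k : ℕ) (hk : ∀ e ∈ E, e.card = k) (f : V → ℝ) :
    Pq E f = 2 * k * Dq E f - 2 * Nq E f := by
  unfold Pq Dq Nq
  rw [← degSum E (fun v => f v ^ 2)]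
  induction E using Multiset.induction_on with
  | empty => simp
  | cons a s ih =>
      simp only [Multiset.map_cons, Multiset.sum_cons]
      rw [edge_id a f, hk a (Multiset.mem_cons_self a s),
        ih (fun e he => hk e (Multiset.mem_cons_of_mem he))]
      ring

lemma cs_step (x y A B C : ℝ) (hA : A ^ 2 ≤ B * C) (hB : 0 ≤ B) (hC : 0 ≤ C) :
    (x * y + A) ^ 2 ≤ (x ^ 2 + B) * (y ^ 2 + C) := by
  have h0 : 0 ≤ x ^ 2 * C + B * y ^ 2 := by positivity
  have h1 : (2 * (x * y) * A) ^ 2 ≤ (x ^ 2 * C + B * y ^ 2) ^ 2 := by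
    nlinarith [sq_nonneg (x ^ 2 * C - B * y ^ 2), mul_le_mul_of_nonneg_left hA
      (sq_nonneg (x * y)), sq_nonneg (x * y)]
  have h2 : 2 * (x * y) * A ≤ x ^ 2 * C + B * y ^ 2 := by
    calc 2 * (x * y) * A ≤ |2 * (x * y) * A| := le_abs_self _
    _ = Real.sqrt ((2 * (x * y) * A) ^ 2) := (Real.sqrt_sq_eq_abs _).symm
    _ ≤ Real.sqrt ((x ^ 2 * C + B * y ^ 2) ^ 2) := Real.sqrt_le_sqrt h1
    _ = x ^ 2 * C + B * y ^ 2 := Real.sqrt_sq h0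
  nlinarith [h2, hA]

lemma ms_sq_nonneg {α : Type*} (m : Multiset α) (f : α → ℝ) :
    0 ≤ (m.map fun a => f a ^ 2).sum :=
  Multiset.sum_nonneg (by
    intro x hx
    obtain ⟨a, _, rfl⟩ := Multiset.mem_map.1 hx
    positivity)

lemma ms_cs {α : Type*} (m : Multiset α) (f g : α → ℝ) :
    ((m.map fun a => f a * g a).sum) ^ 2
      ≤ (m.map fun a => f a ^ 2).sum * (m.map fun a => g a ^ 2).sum := by
  induction m using Multiset.induction_on with
  | empty => simp
  | cons a s ih =>
      simp only [Multiset.map_cons, Multiset.sum_cons]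
      exact cs_step _ _ _ _ _ ih (ms_sq_nonneg s f) (ms_sq_nonneg s g)

lemma ms_cast_map {α : Type*} (m : Multiset α) (f : α → ℕ) :
    (((m.map f).sum : ℕ) : ℝ) = (m.map fun a => (f a : ℝ)).sum := by
  induction m using Multiset.induction_on with
  | empty => simp
  | cons a s ih => simp [ih]

variable {V : Type*} [Fintype V] [DecidableEq V]

lemma bnd_cast (E : Multiset (Finset V)) (S : Finset V) :
    ((bnd E S : ℕ) : ℝ)
      = (E.map fun e => ((e ∩ S).card : ℝ) * ((e.card : ℝ) - ((e ∩ S).card : ℝ))).sum := by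
  unfold bnd
  rw [ms_cast_map]
  apply congrArg
  apply Multiset.map_congr rfl
  intro e _
  have h : (e ∩ S).card ≤ e.card := Finset.card_le_card Finset.inter_subset_left
  push_cast [Nat.cast_sub h]
  ring

/-- bucket lemma -/
lemma bucket (E : Multiset (Finset V)) (k : ℕ) (hk : ∀ e ∈ E, e.card = k) (hk1 : 1 ≤ k)
    (S : Finset V) :
    (∑ r ∈ Finset.Icc 1 (k - 1), Multiset.card (Er E S r) * r * (k - r)) = bnd E S := by
  have step1 : ∀ (F : Multiset (Finset V)), (∀ e ∈ F, e.card = k) →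
      (∑ r ∈ Finset.range (k + 1),
        (Multiset.countP (fun e => (e ∩ S).card = r) F) * (r * (k - r)))
        = bnd F S := by
    intro F
    induction F using Multiset.induction_on with
    | empty => simp [bnd]
    | cons a s ih =>
        intro hF
        have ha : a.card = k := hF a (Multiset.mem_cons_self a s)
        have hr : (a ∩ S).card ∈ Finset.range (k + 1) := by
          rw [Finset.mem_range]
          exact Nat.lt_succ_of_le (ha ▸ Finset.card_le_card Finset.inter_subset_left)
        have hcons : bnd (a ::ₘ s) S = (a ∩ S).card * (k - (a ∩ S).card) + bnd s S := by
          simp [bnd, ha]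
        rw [hcons]
        simp only [Multiset.countP_cons, add_mul, ite_mul, one_mul, zero_mul]
        rw [Finset.sum_add_distrib, ih (fun e he => hF e (Multiset.mem_cons_of_mem he)),
          Finset.sum_ite_eq (Finset.range (k+1)) ((a ∩ S).card) (fun r => r * (k - r)),
          if_pos hr]
        exact add_comm _ _
  rw [← step1 E hk]
  have hsub : Finset.Icc 1 (k - 1) ⊆ Finset.range (k + 1) := by
    intro r hr
    rw [Finset.mem_Icc] at hr
    rw [Finset.mem_range]
    omega
  rw [← Finset.sum_subset hsub]
  · apply Finset.sum_congr rfl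
    intro r _
    rw [show Multiset.card (Er E S r) = Multiset.countP (fun e => (e ∩ S).card = r) E by
      simp [Er, Multiset.countP_eq_card_filter]]
    ring
  · intro r hr hnr
    rw [Finset.mem_range] at hr
    rw [Finset.mem_Icc] at hnr
    have : r = 0 ∨ r = k := by omega
    rcases this with rfl | rfl
    · simp
    · simp

lemma Dq_nonneg (E : Multiset (Finset V)) (f : V → ℝ) : 0 ≤ Dq E f :=
  Finset.sum_nonneg fun v _ => by positivity

lemma Dq_pos (E : Multiset (Finset V)) (hdegpos : ∀ v, 0 < hdeg E v) (f : V → ℝ)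
    (hf : f ≠ 0) : 0 < Dq E f := by
  obtain ⟨v, hv⟩ := Function.ne_iff.1 hf
  apply Finset.sum_pos' (fun v _ => by positivity)
  refine ⟨v, Finset.mem_univ v, ?_⟩
  have h1 : (0:ℝ) < (hdeg E v : ℝ) := by exact_mod_cast hdegpos v
  have h2 : (0:ℝ) < f v ^ 2 := by
    apply sq_pos_of_ne_zero
    simpa using hv
  positivity

lemma Dq_zero_iff (E : Multiset (Finset V)) (hdegpos : ∀ v, 0 < hdeg E v) (f : V → ℝ) :
    Dq E f = 0 ↔ f = 0 := by
  constructor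
  · intro h
    by_contra hf
    exact (Dq_pos E hdegpos f hf).ne' h
  · intro h
    simp [Dq, h]

lemma Pq_nonneg (E : Multiset (Finset V)) (f : V → ℝ) : 0 ≤ Pq E f :=
  Multiset.sum_nonneg (by
    intro x hx
    obtain ⟨e, _, rfl⟩ := Multiset.mem_map.1 hx
    exact Finset.sum_nonneg fun v _ => Finset.sum_nonneg fun w _ => sq_nonneg _)

lemma Nq_nonneg (E : Multiset (Finset V)) (f : V → ℝ) : 0 ≤ Nq E f :=
  Multiset.sum_nonneg (by
    intro x hx
    obtain ⟨e, _, rfl⟩ := Multiset.mem_map.1 hx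
    exact sq_nonneg _)

lemma Mq_nonneg (E : Multiset (Finset V)) (f : V → ℝ) : 0 ≤ Mq E f :=
  Multiset.sum_nonneg (by
    intro x hx
    obtain ⟨e, _, rfl⟩ := Multiset.mem_map.1 hx
    exact Finset.sum_nonneg fun v _ => Finset.sum_nonneg fun w _ => abs_nonneg _)

variable {V : Type*} [Fintype V] [DecidableEq V]

lemma hvol_add_compl (E : Multiset (Finset V)) (S : Finset V) :
    hvol E S + hvol E Sᶜ = hvol E Finset.univ := by
  unfold hvol
  rw [Finset.sum_add_sum_compl]

lemma hvol_mono (E : Multiset (Finset V)) {S T : Finset V} (h : S ⊆ T) :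
    hvol E S ≤ hvol E T :=
  Finset.sum_le_sum_of_subset h

lemma hvol_pos (E : Multiset (Finset V)) (hdegpos : ∀ v, 0 < hdeg E v) {S : Finset V}
    (hS : S.Nonempty) : 0 < hvol E S := by
  obtain ⟨v, hv⟩ := hS
  exact Finset.sum_pos' (fun _ _ => Nat.zero_le _) ⟨v, hv, hdegpos v⟩

lemma hvol_univ_cast (E : Multiset (Finset V)) :
    ((hvol E Finset.univ : ℕ) : ℝ) = ∑ v, (hdeg E v : ℝ) := by
  unfold hvol
  push_cast
  rfl

lemma exists_pair (E : Multiset (Finset V)) [Nonempty V] (hdegpos : ∀ v, 0 < hdeg E v)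
    (hass : ∀ v : V, hdeg E v ≤ ∑ w ∈ Finset.univ.erase v, hdeg E w) :
    ∃ v w : V, v ≠ w := by
  obtain ⟨v⟩ := (inferInstance : Nonempty V)
  rcases Finset.eq_empty_or_nonempty (Finset.univ.erase v) with h | h
  · exfalso
    have := hass v
    rw [h, Finset.sum_empty] at this
    exact absurd this (by simpa using (hdegpos v).ne')
  · obtain ⟨w, hw⟩ := h
    exact ⟨w, v, (Finset.mem_erase.1 hw).1⟩

/-- the witness function with weighted mean zero -/
noncomputable def wit (E : Multiset (Finset V)) (v w : V) : V → ℝ :=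
  fun u => if u = v then (hdeg E w : ℝ) else if u = w then -(hdeg E v : ℝ) else 0

lemma wit_ne_zero (E : Multiset (Finset V)) (hdegpos : ∀ v, 0 < hdeg E v) {v w : V}
    (hvw : v ≠ w) : wit E v w ≠ 0 := by
  intro h
  have := congrFun h v
  simp [wit] at this
  exact absurd this (by exact_mod_cast (hdegpos w).ne')

lemma wit_mean (E : Multiset (Finset V)) {v w : V} (hvw : v ≠ w) :
    ∑ u, (hdeg E u : ℝ) * wit E v w u = 0 := by
  have hsub : ({v, w} : Finset V) ⊆ Finset.univ := Finset.subset_univ _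
  rw [← Finset.sum_subset hsub]
  · rw [Finset.sum_pair hvw]
    simp [wit, hvw, hvw.symm]
    ring
  · intro u _ hu
    simp only [Finset.mem_insert, Finset.mem_singleton, not_or] at hu
    simp [wit, hu.1, hu.2]

lemma Nq_le (E : Multiset (Finset V)) (k : ℕ) (hk : ∀ e ∈ E, e.card = k) (f : V → ℝ) :
    Nq E f ≤ k * Dq E f := by
  unfold Nq
  calc (E.map (fun e => (∑ v ∈ e, f v) ^ 2)).sum
      ≤ (E.map (fun e => (k : ℝ) * ∑ v ∈ e, f v ^ 2)).sum := by
        apply Multiset.sum_map_le_sum_map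
        intro e he
        have := sq_sum_le_card_mul_sum_sq (s := e) (f := f)
        rwa [hk e he] at this
    _ = (k : ℝ) * Dq E f := by
        rw [Multiset.sum_map_mul_left]
        rw [degSum E (fun v => f v ^ 2)]
        rfl

lemma RQ_le_k (E : Multiset (Finset V)) (k : ℕ) (hk : ∀ e ∈ E, e.card = k)
    (hdegpos : ∀ v, 0 < hdeg E v) (f : V → ℝ) (hf : f ≠ 0) : RQ E f ≤ k := by
  have hD : 0 < Dq E f := Dq_pos E hdegpos f hf
  rw [RQ, show (∑ v, (hdeg E v : ℝ) * f v ^ 2) = Dq E f from rfl, div_le_iff₀ hD]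
  exact Nq_le E k hk f

lemma RQ_eq_div (E : Multiset (Finset V)) (f : V → ℝ) : RQ E f = Nq E f / Dq E f := rfl

/-- the set defining lamSecond -/
def lamSet (E : Multiset (Finset V)) : Set ℝ :=
  {x : ℝ | ∃ f : V → ℝ, f ≠ 0 ∧ (∑ v, (hdeg E v : ℝ) * f v = 0) ∧ RQ E f = x}

lemma lamSecond_eq (E : Multiset (Finset V)) : lamSecond E = sSup (lamSet E) := rfl

lemma lamSet_nonempty (E : Multiset (Finset V)) [Nonempty V] (hdegpos : ∀ v, 0 < hdeg E v)
    (hass : ∀ v : V, hdeg E v ≤ ∑ w ∈ Finset.univ.erase v, hdeg E w) :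
    (lamSet E).Nonempty := by
  obtain ⟨v, w, hvw⟩ := exists_pair E hdegpos hass
  exact ⟨RQ E (wit E v w), wit E v w, wit_ne_zero E hdegpos hvw, wit_mean E hvw, rfl⟩

lemma lamSet_bddAbove (E : Multiset (Finset V)) (k : ℕ) (hk : ∀ e ∈ E, e.card = k)
    (hdegpos : ∀ v, 0 < hdeg E v) : BddAbove (lamSet E) := by
  refine ⟨k, ?_⟩
  rintro x ⟨f, hf0, -, rfl⟩
  exact RQ_le_k E k hk hdegpos f hf0

lemma lamSecond_le (E : Multiset (Finset V)) [Nonempty V] (b : ℝ)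
    (hdegpos : ∀ v, 0 < hdeg E v)
    (hass : ∀ v : V, hdeg E v ≤ ∑ w ∈ Finset.univ.erase v, hdeg E w)
    (hb : ∀ f : V → ℝ, f ≠ 0 → (∑ v, (hdeg E v : ℝ) * f v = 0) → RQ E f ≤ b) :
    lamSecond E ≤ b := by
  apply csSup_le (lamSet_nonempty E hdegpos hass)
  rintro x ⟨f, hf0, hm, rfl⟩
  exact hb f hf0 hm

lemma le_lamSecond (E : Multiset (Finset V)) (k : ℕ) (hk : ∀ e ∈ E, e.card = k)
    (hdegpos : ∀ v, 0 < hdeg E v) (f : V → ℝ) (hf0 : f ≠ 0)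
    (hm : ∑ v, (hdeg E v : ℝ) * f v = 0) : RQ E f ≤ lamSecond E :=
  le_csSup (lamSet_bddAbove E k hk hdegpos) ⟨f, hf0, hm, rfl⟩

lemma k_pos (E : Multiset (Finset V)) (k : ℕ) [Nonempty V] (hk : ∀ e ∈ E, e.card = k)
    (hdegpos : ∀ v, 0 < hdeg E v) : 0 < k := by
  obtain ⟨v⟩ := (inferInstance : Nonempty V)
  have := hdegpos v
  rw [hdeg, Multiset.countP_pos] at this
  obtain ⟨e, he, hv⟩ := this
  have h1 : e.Nonempty := ⟨v, hv⟩
  have := Finset.card_pos.2 h1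
  rwa [hk e he] at this

lemma lamSecond_one (E : Multiset (Finset V)) [Nonempty V] (hk : ∀ e ∈ E, e.card = 1)
    (hdegpos : ∀ v, 0 < hdeg E v)
    (hass : ∀ v : V, hdeg E v ≤ ∑ w ∈ Finset.univ.erase v, hdeg E w) :
    lamSecond E = 1 := by
  have key : ∀ f : V → ℝ, f ≠ 0 → RQ E f = 1 := by
    intro f hf0
    have hNq : Nq E f = Dq E f := by
      unfold Nq Dq
      rw [← degSum E (fun v => f v ^ 2)]
      apply congrArg
      apply Multiset.map_congr rfl
      intro e he
      obtain ⟨x, rfl⟩ := Finset.card_eq_one.1 (hk e he)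
      simp
    rw [RQ_eq_div, hNq, div_self (Dq_pos E hdegpos f hf0).ne']
  have hset : lamSet E = {1} := by
    apply Set.eq_singleton_iff_unique_mem.2
    constructor
    · obtain ⟨v, w, hvw⟩ := exists_pair E hdegpos hass
      exact ⟨wit E v w, wit_ne_zero E hdegpos hvw, wit_mean E hvw,
        key _ (wit_ne_zero E hdegpos hvw)⟩
    · rintro x ⟨f, hf0, -, rfl⟩
      exact key f hf0
  rw [lamSecond_eq, hset, csSup_singleton]

lemma ms_map_sub {α : Type*} (m : Multiset α) (f g : α → ℝ) :
    (m.map f).sum - (m.map g).sum = (m.map fun a => f a - g a).sum := by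
  induction m using Multiset.induction_on with
  | empty => simp
  | cons a s ih => simp only [Multiset.map_cons, Multiset.sum_cons, ← ih]; ring

variable {V : Type*} [Fintype V] [DecidableEq V]

lemma sum_two_val (e S : Finset V) (a b : ℝ) :
    ∑ v ∈ e, (if v ∈ S then a else b)
      = ((e ∩ S).card : ℝ) * a + (((e.card : ℝ)) - ((e ∩ S).card : ℝ)) * b := by
  rw [Finset.sum_ite, Finset.sum_const, Finset.sum_const, Finset.filter_mem_eq_inter,
    nsmul_eq_mul, nsmul_eq_mul]
  have h1 : e.filter (fun v => v ∉ S) = e \ (e ∩ S) := by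
    ext x
    simp only [Finset.mem_filter, Finset.mem_sdiff, Finset.mem_inter]
    tauto
  rw [h1, Finset.card_sdiff_of_subset Finset.inter_subset_left,
    Nat.cast_sub (Finset.card_le_card Finset.inter_subset_left)]

/-- the two-valued cut function -/
noncomputable def cutf (E : Multiset (Finset V)) (S : Finset V) : V → ℝ :=
  fun v => if v ∈ S then (hvol E Sᶜ : ℝ) else -(hvol E S : ℝ)

lemma cutf_mean (E : Multiset (Finset V)) (S : Finset V) :
    ∑ v, (hdeg E v : ℝ) * cutf E S v = 0 := by
  rw [← Finset.sum_add_sum_compl S]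
  have h1 : ∑ v ∈ S, (hdeg E v : ℝ) * cutf E S v = (hvol E S : ℝ) * (hvol E Sᶜ : ℝ) := by
    rw [show (hvol E S : ℝ) = ∑ v ∈ S, (hdeg E v : ℝ) by rw [hvol]; push_cast; rfl,
      Finset.sum_mul]
    exact Finset.sum_congr rfl fun v hv => by rw [cutf, if_pos hv]
  have h2 : ∑ v ∈ Sᶜ, (hdeg E v : ℝ) * cutf E S v
      = -((hvol E Sᶜ : ℝ) * (hvol E S : ℝ)) := by
    rw [show (hvol E Sᶜ : ℝ) = ∑ v ∈ Sᶜ, (hdeg E v : ℝ) by rw [hvol]; push_cast; rfl,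
      Finset.sum_mul, ← Finset.sum_neg_distrib]
    refine Finset.sum_congr rfl fun v hv => ?_
    rw [cutf, if_neg (Finset.mem_compl.1 hv)]
    ring
  rw [h1, h2]
  ring

lemma cutf_ne_zero (E : Multiset (Finset V)) (hdegpos : ∀ v, 0 < hdeg E v) {S : Finset V}
    (hS : S.Nonempty) (hSu : S ≠ Finset.univ) : cutf E S ≠ 0 := by
  obtain ⟨v, hv⟩ := hS
  intro h
  have := congrFun h v
  rw [cutf, if_pos hv, Pi.zero_apply] at this
  have hc : (Sᶜ : Finset V).Nonempty := by
    rw [← Finset.card_pos, Finset.card_compl]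
    have h2 := Finset.card_lt_card (Finset.ssubset_univ_iff.2 hSu)
    rw [Finset.card_univ] at h2
    omega
  exact absurd this (by exact_mod_cast (hvol_pos E hdegpos hc).ne')

lemma compl_nonempty {S : Finset V} (hSu : S ≠ Finset.univ) : (Sᶜ : Finset V).Nonempty := by
  rw [← Finset.card_pos, Finset.card_compl]
  have h2 := Finset.card_lt_card (Finset.ssubset_univ_iff.2 hSu)
  rw [Finset.card_univ] at h2
  omega

lemma cutf_Dq (E : Multiset (Finset V)) (S : Finset V) :
    Dq E (cutf E S) = (hvol E S : ℝ) * (hvol E Sᶜ : ℝ) * (hvol E Finset.univ : ℝ) := by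
  unfold Dq
  rw [← Finset.sum_add_sum_compl S]
  have h1 : ∑ v ∈ S, (hdeg E v : ℝ) * cutf E S v ^ 2
      = (hvol E S : ℝ) * (hvol E Sᶜ : ℝ) ^ 2 := by
    rw [show (hvol E S : ℝ) = ∑ v ∈ S, (hdeg E v : ℝ) by rw [hvol]; push_cast; rfl,
      Finset.sum_mul]
    exact Finset.sum_congr rfl fun v hv => by rw [cutf, if_pos hv]
  have h2 : ∑ v ∈ Sᶜ, (hdeg E v : ℝ) * cutf E S v ^ 2
      = (hvol E Sᶜ : ℝ) * (hvol E S : ℝ) ^ 2 := by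
    rw [show (hvol E Sᶜ : ℝ) = ∑ v ∈ Sᶜ, (hdeg E v : ℝ) by rw [hvol]; push_cast; rfl,
      Finset.sum_mul]
    refine Finset.sum_congr rfl fun v hv => ?_
    rw [cutf, if_neg (Finset.mem_compl.1 hv)]
    ring
  rw [h1, h2]
  have h3 := hvol_add_compl E S
  have h4 : (hvol E Finset.univ : ℝ) = (hvol E S : ℝ) + (hvol E Sᶜ : ℝ) := by
    exact_mod_cast congrArg (Nat.cast : ℕ → ℝ) h3.symm
  rw [h4]
  ring

lemma cutf_gap (E : Multiset (Finset V)) (k : ℕ) (hk : ∀ e ∈ E, e.card = k)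
    (S : Finset V) :
    (k : ℝ) * Dq E (cutf E S) - Nq E (cutf E S)
      = (bnd E S : ℝ) * (hvol E Finset.univ : ℝ) ^ 2 := by
  have hDq : Dq E (cutf E S) = (E.map fun e => ∑ v ∈ e, cutf E S v ^ 2).sum :=
    (degSum E fun v => cutf E S v ^ 2).symm
  rw [hDq, Nq, ← Multiset.sum_map_mul_left, ms_map_sub, bnd_cast,
    ← Multiset.sum_map_mul_right]
  apply congrArg
  apply Multiset.map_congr rfl
  intro e he
  have hsq : ∀ v, cutf E S v ^ 2
      = if v ∈ S then ((hvol E Sᶜ : ℝ)) ^ 2 else (-(hvol E S : ℝ)) ^ 2 := by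
    intro v
    rw [cutf]
    split <;> ring
  have h4 : (hvol E Finset.univ : ℝ) = (hvol E S : ℝ) + (hvol E Sᶜ : ℝ) := by
    exact_mod_cast congrArg (Nat.cast : ℕ → ℝ) (hvol_add_compl E S).symm
  rw [show (∑ v ∈ e, cutf E S v ^ 2) = ∑ v ∈ e, (if v ∈ S then ((hvol E Sᶜ : ℝ)) ^ 2
      else (-(hvol E S : ℝ)) ^ 2) from Finset.sum_congr rfl fun v _ => hsq v]
  rw [sum_two_val, show (∑ v ∈ e, cutf E S v) = ∑ v ∈ e, (if v ∈ S then ((hvol E Sᶜ : ℝ))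
      else (-(hvol E S : ℝ))) from rfl, sum_two_val, hk e he, h4]
  ring

lemma easy_step (E : Multiset (Finset V)) [Nonempty V] (k : ℕ) (hk : ∀ e ∈ E, e.card = k)
    (hdegpos : ∀ v, 0 < hdeg E v) (S : Finset V) (hS : S.Nonempty)
    (hSu : S ≠ Finset.univ) :
    (k : ℝ) - lamSecond E
      ≤ 2 * ((bnd E S : ℝ) / ((min (hvol E S) (hvol E Sᶜ) : ℕ) : ℝ)) := by
  set f := cutf E S with hf
  have hf0 : f ≠ 0 := cutf_ne_zero E hdegpos hS hSu
  have hD : 0 < Dq E f := Dq_pos E hdegpos f hf0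
  have hRQ : RQ E f ≤ lamSecond E :=
    le_lamSecond E k hk hdegpos f hf0 (cutf_mean E S)
  have hVS : (0:ℝ) < (hvol E S : ℝ) := by exact_mod_cast hvol_pos E hdegpos hS
  have hVSc : (0:ℝ) < (hvol E Sᶜ : ℝ) := by
    exact_mod_cast hvol_pos E hdegpos (compl_nonempty hSu)
  have hVU : (hvol E Finset.univ : ℝ) = (hvol E S : ℝ) + (hvol E Sᶜ : ℝ) := by
    exact_mod_cast congrArg (Nat.cast : ℕ → ℝ) (hvol_add_compl E S).symm
  have hBnn : (0:ℝ) ≤ (bnd E S : ℝ) := Nat.cast_nonneg _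
  have key : (k : ℝ) - RQ E f
      = (bnd E S : ℝ) * (hvol E Finset.univ : ℝ) ^ 2 / Dq E f := by
    rw [← cutf_gap E k hk S, RQ_eq_div]
    field_simp
    rfl
  have key2 : (k : ℝ) - RQ E f
      ≤ 2 * ((bnd E S : ℝ) / ((min (hvol E S) (hvol E Sᶜ) : ℕ) : ℝ)) := by
    have hVU0 : (0:ℝ) < (hvol E Finset.univ : ℝ) := by rw [hVU]; positivity
    rw [key, cutf_Dq, Nat.cast_min]
    rcases le_total (hvol E S) (hvol E Sᶜ) with h | h
    · rw [min_eq_left (by exact_mod_cast h : ((hvol E S :ℕ):ℝ) ≤ (hvol E Sᶜ : ℕ)),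
        mul_div_assoc', div_le_div_iff₀ (mul_pos (mul_pos hVS hVSc) hVU0) hVS, hVU]
      have h' : (hvol E S : ℝ) ≤ (hvol E Sᶜ : ℝ) := by exact_mod_cast h
      nlinarith [mul_nonneg (mul_nonneg hBnn hVS.le) hVS.le,
        mul_nonneg (mul_nonneg hBnn hVS.le) hVSc.le,
        mul_nonneg (mul_nonneg hBnn hVS.le) (mul_nonneg hVS.le (sub_nonneg.2 h'))]
    · rw [min_eq_right (by exact_mod_cast h : ((hvol E Sᶜ :ℕ):ℝ) ≤ (hvol E S : ℕ)),
        mul_div_assoc', div_le_div_iff₀ (mul_pos (mul_pos hVS hVSc) hVU0) hVSc, hVU]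
      have h' : (hvol E Sᶜ : ℝ) ≤ (hvol E S : ℝ) := by exact_mod_cast h
      nlinarith [mul_nonneg (mul_nonneg hBnn hVSc.le) hVSc.le,
        mul_nonneg (mul_nonneg hBnn hVSc.le) hVS.le,
        mul_nonneg (mul_nonneg hBnn hVSc.le) (mul_nonneg hVSc.le (sub_nonneg.2 h'))]
  linarith

lemma ms_map_add {α : Type*} (m : Multiset α) (f g : α → ℝ) :
    (m.map fun a => f a + g a).sum = (m.map f).sum + (m.map g).sum := by
  induction m using Multiset.induction_on with
  | empty => simp
  | cons a s ih => simp only [Multiset.map_cons, Multiset.sum_cons, ih]; ring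

variable {V : Type*} [Fintype V] [DecidableEq V]

/-- superlevel set -/
noncomputable def slv (ψ : V → ℝ) (t : ℝ) : Finset V := Finset.univ.filter (fun v => t ≤ ψ v)

lemma coarea (E : Multiset (Finset V)) (c : ℝ) :
    ∀ n : ℕ, ∀ ψ : V → ℝ, (∀ v, 0 ≤ ψ v) →
      ((Finset.univ.image ψ).filter (fun x => 0 < x)).card ≤ n →
      (∀ t : ℝ, 0 < t → (slv ψ t).Nonempty →
        c * (hvol E (slv ψ t) : ℝ) ≤ (bnd E (slv ψ t) : ℝ)) →
      2 * c * Dq E ψ ≤ Mq E ψ := by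
  intro n
  induction n with
  | zero =>
      intro ψ hnn hcard _
      have hψ0 : ∀ v, ψ v = 0 := by
        intro v
        by_contra h
        have hpos : 0 < ψ v := lt_of_le_of_ne (hnn v) (Ne.symm h)
        have hmem : ψ v ∈ (Finset.univ.image ψ).filter (fun x => 0 < x) :=
          Finset.mem_filter.2 ⟨Finset.mem_image_of_mem ψ (Finset.mem_univ v), hpos⟩
        have := Finset.card_pos.2 ⟨ψ v, hmem⟩
        omega
      have hD : Dq E ψ = 0 := by simp [Dq, hψ0]
      have hM : Mq E ψ = 0 := by
        unfold Mq
        rw [show E.map (fun e => ∑ v ∈ e, ∑ w ∈ e, |ψ v ^ 2 - ψ w ^ 2|)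
            = E.map (fun _ => (0:ℝ)) from Multiset.map_congr rfl fun e _ => by
          simp [hψ0]]
        simp
      rw [hD, hM]
      simp
  | succ n ih =>
      intro ψ hnn hcard hyp
      set P := (Finset.univ.image ψ).filter (fun x => 0 < x) with hP
      by_cases hn : P.card ≤ n
      · exact ih ψ hnn hn hyp
      have hPne : P.Nonempty := by
        rw [← Finset.card_pos]; omega
      set m := P.max' hPne with hm
      have hmP : m ∈ P := P.max'_mem hPne
      have hm0 : 0 < m := (Finset.mem_filter.1 hmP).2
      have hmim : m ∈ Finset.univ.image ψ := (Finset.mem_filter.1 hmP).1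
      have hmax : ∀ v, ψ v ≤ m := by
        intro v
        rcases eq_or_lt_of_le (hnn v) with h | h
        · exact le_of_lt (h ▸ hm0)
        · exact P.le_max' _ (Finset.mem_filter.2
            ⟨Finset.mem_image_of_mem ψ (Finset.mem_univ v), h⟩)
      set Q := (Finset.univ.image ψ).filter (fun x => x < m) with hQdef
      set s := if hQ : Q.Nonempty then Q.max' hQ else 0 with hs
      have hs0 : 0 ≤ s := by
        rw [hs]
        split
        · next hQ =>
            obtain ⟨v, _, hv⟩ := Finset.mem_image.1 (Finset.mem_filter.1 (Q.max'_mem hQ)).1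
            rw [← hv]; exact hnn v
        · exact le_rfl
      have hsm : s < m := by
        rw [hs]
        split
        · next hQ => exact (Finset.mem_filter.1 (Q.max'_mem hQ)).2
        · exact hm0
      have hle : ∀ v, ψ v ≠ m → ψ v ≤ s := by
        intro v hv
        have h1 : ψ v < m := lt_of_le_of_ne (hmax v) hv
        have hQne : Q.Nonempty := ⟨ψ v, Finset.mem_filter.2
          ⟨Finset.mem_image_of_mem ψ (Finset.mem_univ v), h1⟩⟩
        rw [hs, dif_pos hQne]
        exact Q.le_max' _ (Finset.mem_filter.2
          ⟨Finset.mem_image_of_mem ψ (Finset.mem_univ v), h1⟩)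
      set ψ' := fun v => min (ψ v) s with hψ'def
      have hψ' : ∀ v, ψ' v = if m ≤ ψ v then s else ψ v := by
        intro v
        by_cases h : m ≤ ψ v
        · rw [if_pos h]
          exact min_eq_right (le_trans hsm.le h)
        · rw [if_neg h]
          exact min_eq_left (hle v (fun hc => h (le_of_eq hc.symm)))
      have hψ'nn : ∀ v, 0 ≤ ψ' v := fun v => le_min (hnn v) hs0
      set S := slv ψ m with hSdef
      have hmemS : ∀ v, v ∈ S ↔ m ≤ ψ v := by
        intro v; rw [hSdef, slv, Finset.mem_filter]
        simp
      have hSne : S.Nonempty := by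
        obtain ⟨v, _, hv⟩ := Finset.mem_image.1 hmim
        exact ⟨v, (hmemS v).2 (le_of_eq hv.symm)⟩
      -- cardinality decreases
      have hcard' : ((Finset.univ.image ψ').filter (fun x => 0 < x)).card ≤ n := by
        have hsub : (Finset.univ.image ψ').filter (fun x => 0 < x) ⊆ P.erase m := by
          intro x hx
          obtain ⟨hxim, hxpos⟩ := Finset.mem_filter.1 hx
          obtain ⟨v, _, hv⟩ := Finset.mem_image.1 hxim
          have hxs : x ≤ s := by rw [← hv]; exact min_le_right _ _
          have hxm : x ≠ m := fun h => absurd (h ▸ hxs) (not_le.2 hsm)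
          refine Finset.mem_erase.2 ⟨hxm, Finset.mem_filter.2 ⟨?_, hxpos⟩⟩
          rw [hψ' v] at hv
          by_cases h : m ≤ ψ v
          · rw [if_pos h] at hv
            have hQne : Q.Nonempty := by
              by_contra hQ
              rw [hs, dif_neg hQ] at hv
              rw [← hv] at hxpos
              exact lt_irrefl 0 hxpos
            rw [hs, dif_pos hQne] at hv
            rw [← hv]
            exact (Finset.mem_filter.1 (Q.max'_mem hQne)).1
          · rw [if_neg h] at hv
            rw [← hv]
            exact Finset.mem_image_of_mem ψ (Finset.mem_univ v)
        have h1 := Finset.card_le_card hsub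
        rw [Finset.card_erase_of_mem hmP] at h1
        omega
      -- hypothesis transfers
      have hyp' : ∀ t : ℝ, 0 < t → (slv ψ' t).Nonempty →
          c * (hvol E (slv ψ' t) : ℝ) ≤ (bnd E (slv ψ' t) : ℝ) := by
        intro t ht htne
        obtain ⟨w, hw⟩ := htne
        have hts : t ≤ s := le_trans (Finset.mem_filter.1 hw).2 (min_le_right _ _)
        have heq : slv ψ' t = slv ψ t := by
          ext v
          simp only [slv, Finset.mem_filter, Finset.mem_univ, true_and]
          constructor
          · intro h
            exact le_trans h (min_le_left _ _)
          · intro h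
            exact le_min h hts
        rw [heq]
        apply hyp t ht
        rw [← heq]
        exact ⟨w, hw⟩
      have ihψ' := ih ψ' hψ'nn hcard' hyp'
      -- decomposition of Dq
      have hms2 : (0:ℝ) ≤ m^2 - s^2 := by nlinarith [hs0, hsm.le]
      have decD : Dq E ψ = Dq E ψ' + (m^2 - s^2) * (hvol E S : ℝ) := by
        have hpt : ∀ v, (hdeg E v : ℝ) * ψ v ^ 2
            = (hdeg E v : ℝ) * ψ' v ^ 2
              + (if m ≤ ψ v then (hdeg E v : ℝ) * (m^2 - s^2) else 0) := by
          intro v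
          rw [hψ' v]
          by_cases h : m ≤ ψ v
          · rw [if_pos h, if_pos h, le_antisymm (hmax v) h]
            ring
          · rw [if_neg h, if_neg h]
            ring
        rw [Dq, Finset.sum_congr rfl (fun v _ => hpt v), Finset.sum_add_distrib]
        apply congrArg
        rw [← Finset.sum_filter, show Finset.univ.filter (fun v => m ≤ ψ v) = S from rfl]
        rw [show (hvol E S : ℝ) = ∑ v ∈ S, (hdeg E v : ℝ) by rw [hvol]; push_cast; rfl,
          Finset.mul_sum]
        exact Finset.sum_congr rfl fun v _ => by ring
      -- decomposition of Mq
      have hχ : ∀ e : Finset V, ∑ v ∈ e, (if v ∈ S then (1:ℝ) else 0)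
          = ((e ∩ S).card : ℝ) := by
        intro e
        rw [sum_two_val]
        ring
      have decM : Mq E ψ = Mq E ψ' + 2 * (m^2 - s^2) * (bnd E S : ℝ) := by
        have hpw : ∀ v w : V, |ψ v ^ 2 - ψ w ^ 2|
            = |ψ' v ^ 2 - ψ' w ^ 2| + (m^2 - s^2) *
              ((if v ∈ S then (1:ℝ) else 0) + (if w ∈ S then (1:ℝ) else 0)
                - 2 * (if v ∈ S then (1:ℝ) else 0) * (if w ∈ S then (1:ℝ) else 0)) := by
          intro v w
          rw [hψ' v, hψ' w]
          by_cases hv : m ≤ ψ v <;> by_cases hw : m ≤ ψ w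
          · rw [if_pos hv, if_pos hw, if_pos ((hmemS v).2 hv), if_pos ((hmemS w).2 hw),
              le_antisymm (hmax v) hv, le_antisymm (hmax w) hw]
            norm_num
          · have hwm : ψ w ≤ s := hle w (fun h => hw (le_of_eq h.symm))
            have h1 : ψ w ^ 2 ≤ s ^ 2 := by nlinarith [hnn w]
            have h2 : ψ w ^ 2 ≤ m ^ 2 := by nlinarith
            rw [if_pos hv, if_neg hw, if_pos ((hmemS v).2 hv),
              if_neg (fun h => hw ((hmemS w).1 h)), le_antisymm (hmax v) hv,
              abs_of_nonneg (by linarith), abs_of_nonneg (by linarith)]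
            ring
          · have hvm : ψ v ≤ s := hle v (fun h => hv (le_of_eq h.symm))
            have h1 : ψ v ^ 2 ≤ s ^ 2 := by nlinarith [hnn v]
            have h2 : ψ v ^ 2 ≤ m ^ 2 := by nlinarith
            rw [if_neg hv, if_pos hw, if_neg (fun h => hv ((hmemS v).1 h)),
              if_pos ((hmemS w).2 hw), le_antisymm (hmax w) hw,
              abs_of_nonpos (by linarith), abs_of_nonpos (by linarith)]
            ring
          · rw [if_neg hv, if_neg hw, if_neg (fun h => hv ((hmemS v).1 h)),
              if_neg (fun h => hw ((hmemS w).1 h))]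
            ring
        have hsum : ∀ e : Finset V, ∑ v ∈ e, ∑ w ∈ e,
            ((if v ∈ S then (1:ℝ) else 0) + (if w ∈ S then (1:ℝ) else 0)
              - 2 * (if v ∈ S then (1:ℝ) else 0) * (if w ∈ S then (1:ℝ) else 0))
            = 2 * (((e ∩ S).card : ℝ) * ((e.card : ℝ) - ((e ∩ S).card : ℝ))) := by
          intro e
          have h2 : ∀ v ∈ e, ∑ w ∈ e,
              ((if v ∈ S then (1:ℝ) else 0) + (if w ∈ S then (1:ℝ) else 0)
                - 2 * (if v ∈ S then (1:ℝ) else 0) * (if w ∈ S then (1:ℝ) else 0))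
              = (e.card : ℝ) * (if v ∈ S then (1:ℝ) else 0) + ((e ∩ S).card : ℝ)
                - 2 * (if v ∈ S then (1:ℝ) else 0) * ((e ∩ S).card : ℝ) := by
            intro v _
            rw [Finset.sum_sub_distrib, Finset.sum_add_distrib, Finset.sum_const,
              nsmul_eq_mul, hχ e, ← Finset.mul_sum, hχ e]
          rw [Finset.sum_congr rfl h2, Finset.sum_sub_distrib, Finset.sum_add_distrib,
            ← Finset.mul_sum, hχ e, Finset.sum_const, nsmul_eq_mul, ← Finset.sum_mul,
            ← Finset.mul_sum, hχ e]
          ring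
        have edgeEq : ∀ e ∈ E, (∑ v ∈ e, ∑ w ∈ e, |ψ v ^ 2 - ψ w ^ 2|)
            = (∑ v ∈ e, ∑ w ∈ e, |ψ' v ^ 2 - ψ' w ^ 2|)
              + (2 * (m^2 - s^2)) * (((e ∩ S).card : ℝ)
                  * ((e.card : ℝ) - ((e ∩ S).card : ℝ))) := by
          intro e _
          rw [Finset.sum_congr rfl (fun v (_ : v ∈ e) =>
            Finset.sum_congr rfl (fun w (_ : w ∈ e) => hpw v w))]
          simp only [Finset.sum_add_distrib, ← Finset.mul_sum]
          rw [hsum e]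
          ring
        rw [Mq, Multiset.map_congr rfl edgeEq, ms_map_add, Multiset.sum_map_mul_left,
          ← bnd_cast]
        rfl
      -- conclusion
      have hstep : c * (hvol E S : ℝ) ≤ (bnd E S : ℝ) := hyp m hm0 hSne
      have : 2 * c * ((m^2 - s^2) * (hvol E S : ℝ))
          ≤ 2 * (m^2 - s^2) * (bnd E S : ℝ) := by nlinarith [hms2, hstep]
      rw [decD, decM]
      nlinarith [ihψ']

variable {V : Type*} [Fintype V] [DecidableEq V]

/-- the Y-form -/
noncomputable def Yq (E : Multiset (Finset V)) (ψ : V → ℝ) : ℝ :=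
  (E.map (fun e => ∑ v ∈ e, ∑ w ∈ e, (if v = w then 0 else (ψ v + ψ w) ^ 2))).sum

lemma edge_cs (e : Finset V) (ψ : V → ℝ) (hnn : ∀ v, 0 ≤ ψ v) :
    (∑ v ∈ e, ∑ w ∈ e, |ψ v ^ 2 - ψ w ^ 2|) ^ 2
      ≤ (∑ v ∈ e, ∑ w ∈ e, (ψ v - ψ w) ^ 2)
        * (∑ v ∈ e, ∑ w ∈ e, (if v = w then 0 else (ψ v + ψ w) ^ 2)) := by
  have h1 : ∑ v ∈ e, ∑ w ∈ e, |ψ v ^ 2 - ψ w ^ 2|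
      = ∑ p ∈ e ×ˢ e, |ψ p.1 - ψ p.2| * (if p.1 = p.2 then 0 else ψ p.1 + ψ p.2) := by
    rw [Finset.sum_product]
    refine Finset.sum_congr rfl fun v _ => Finset.sum_congr rfl fun w _ => ?_
    by_cases h : v = w
    · subst h
      simp
    · have hab : |ψ v + ψ w| = ψ v + ψ w :=
        abs_of_nonneg (by have := hnn v; have := hnn w; linarith)
      rw [if_neg h, show ψ v ^ 2 - ψ w ^ 2 = (ψ v - ψ w) * (ψ v + ψ w) by ring, abs_mul, hab]
  have h2 : ∑ v ∈ e, ∑ w ∈ e, (ψ v - ψ w) ^ 2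
      = ∑ p ∈ e ×ˢ e, |ψ p.1 - ψ p.2| ^ 2 := by
    rw [Finset.sum_product]
    exact Finset.sum_congr rfl fun v _ => Finset.sum_congr rfl fun w _ => (sq_abs _).symm
  have h3 : ∑ v ∈ e, ∑ w ∈ e, (if v = w then 0 else (ψ v + ψ w) ^ 2)
      = ∑ p ∈ e ×ˢ e, (if p.1 = p.2 then 0 else ψ p.1 + ψ p.2) ^ 2 := by
    rw [Finset.sum_product]
    refine Finset.sum_congr rfl fun v _ => Finset.sum_congr rfl fun w _ => ?_
    by_cases h : v = w <;> simp [h]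
  rw [h1, h2, h3]
  exact Finset.sum_mul_sq_le_sq_mul_sq _ _ _

lemma edge_Y (e : Finset V) (ψ : V → ℝ) :
    ∑ v ∈ e, ∑ w ∈ e, (if v = w then 0 else (ψ v + ψ w) ^ 2)
      ≤ 4 * ((e.card : ℝ) - 1) * ∑ v ∈ e, ψ v ^ 2 := by
  have hpt : ∀ v w : V, (if v = w then (0:ℝ) else (ψ v + ψ w) ^ 2)
      ≤ 2 * (ψ v ^ 2 + ψ w ^ 2) - (if v = w then 2 * (ψ v ^ 2 + ψ w ^ 2) else 0) := by
    intro v w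
    by_cases h : v = w
    · simp [h]
    · rw [if_neg h, if_neg h]
      nlinarith [sq_nonneg (ψ v - ψ w)]
  calc ∑ v ∈ e, ∑ w ∈ e, (if v = w then (0:ℝ) else (ψ v + ψ w) ^ 2)
      ≤ ∑ v ∈ e, ∑ w ∈ e, (2 * (ψ v ^ 2 + ψ w ^ 2)
          - (if v = w then 2 * (ψ v ^ 2 + ψ w ^ 2) else 0)) :=
        Finset.sum_le_sum fun v _ => Finset.sum_le_sum fun w _ => hpt v w
    _ = 4 * ((e.card : ℝ) - 1) * ∑ v ∈ e, ψ v ^ 2 := by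
        have hdiag : ∀ v ∈ e, ∑ w ∈ e, (if v = w then 2 * (ψ v ^ 2 + ψ w ^ 2) else 0)
            = 2 * (ψ v ^ 2 + ψ v ^ 2) := by
          intro v hv
          rw [Finset.sum_ite_eq e v (fun w => 2 * (ψ v ^ 2 + ψ w ^ 2)), if_pos hv]
        have hinner : ∀ v ∈ e, ∑ w ∈ e, (2 * (ψ v ^ 2 + ψ w ^ 2)
            - (if v = w then 2 * (ψ v ^ 2 + ψ w ^ 2) else 0))
            = 2 * (e.card : ℝ) * ψ v ^ 2 + 2 * (∑ w ∈ e, ψ w ^ 2) - 4 * ψ v ^ 2 := by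
          intro v hv
          rw [Finset.sum_sub_distrib, hdiag v hv]
          have h5 : ∑ w ∈ e, 2 * (ψ v ^ 2 + ψ w ^ 2)
              = ∑ w ∈ e, (2 * ψ v ^ 2 + 2 * ψ w ^ 2) :=
            Finset.sum_congr rfl fun w _ => by ring
          rw [h5, Finset.sum_add_distrib, Finset.sum_const, nsmul_eq_mul, ← Finset.mul_sum]
          ring
        rw [Finset.sum_congr rfl hinner, Finset.sum_sub_distrib, Finset.sum_add_distrib,
          ← Finset.mul_sum, ← Finset.mul_sum, ← Finset.mul_sum, Finset.sum_const,
          nsmul_eq_mul]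
        ring

variable {V : Type*} [Fintype V] [DecidableEq V]

lemma Yq_nonneg_terms (e : Finset V) (ψ : V → ℝ) :
    0 ≤ ∑ v ∈ e, ∑ w ∈ e, (if v = w then (0:ℝ) else (ψ v + ψ w) ^ 2) :=
  Finset.sum_nonneg fun v _ => Finset.sum_nonneg fun w _ => by positivity

lemma Mq_sq (E : Multiset (Finset V)) (ψ : V → ℝ) (hnn : ∀ v, 0 ≤ ψ v) :
    Mq E ψ ^ 2 ≤ Pq E ψ * Yq E ψ := by
  set p : Finset V → ℝ := fun e => ∑ v ∈ e, ∑ w ∈ e, (ψ v - ψ w) ^ 2 with hp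
  set y : Finset V → ℝ := fun e => ∑ v ∈ e, ∑ w ∈ e, (if v = w then 0 else (ψ v + ψ w) ^ 2)
    with hy
  have hpnn : ∀ e, 0 ≤ p e := fun e =>
    Finset.sum_nonneg fun v _ => Finset.sum_nonneg fun w _ => sq_nonneg _
  have hynn : ∀ e, 0 ≤ y e := fun e => Yq_nonneg_terms e ψ
  have h1 : Mq E ψ ≤ (E.map fun e => Real.sqrt (p e) * Real.sqrt (y e)).sum := by
    apply Multiset.sum_map_le_sum_map
    intro e _
    rw [← Real.sqrt_mul (hpnn e)]
    exact Real.le_sqrt_of_sq_le (edge_cs e ψ hnn)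
  have h2 : ((E.map fun e => Real.sqrt (p e) * Real.sqrt (y e)).sum) ^ 2
      ≤ (E.map fun e => Real.sqrt (p e) ^ 2).sum * (E.map fun e => Real.sqrt (y e) ^ 2).sum :=
    ms_cs E _ _
  have h3 : (E.map fun e => Real.sqrt (p e) ^ 2).sum = Pq E ψ := by
    rw [Pq]
    apply congrArg
    apply Multiset.map_congr rfl
    intro e _
    exact Real.sq_sqrt (hpnn e)
  have h4 : (E.map fun e => Real.sqrt (y e) ^ 2).sum = Yq E ψ := by
    rw [Yq]
    apply congrArg
    apply Multiset.map_congr rfl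
    intro e _
    exact Real.sq_sqrt (hynn e)
  have hM : 0 ≤ Mq E ψ := Mq_nonneg E ψ
  calc Mq E ψ ^ 2 ≤ ((E.map fun e => Real.sqrt (p e) * Real.sqrt (y e)).sum) ^ 2 := by
        apply pow_le_pow_left₀ hM h1
    _ ≤ _ := h2
    _ = Pq E ψ * Yq E ψ := by rw [h3, h4]

lemma Yq_le (E : Multiset (Finset V)) (k : ℕ) (hk : ∀ e ∈ E, e.card = k) (ψ : V → ℝ) :
    Yq E ψ ≤ 4 * ((k:ℝ) - 1) * Dq E ψ := by
  calc Yq E ψ ≤ (E.map fun e => 4 * ((k:ℝ) - 1) * ∑ v ∈ e, ψ v ^ 2).sum := by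
        apply Multiset.sum_map_le_sum_map
        intro e he
        have := edge_Y e ψ
        rwa [hk e he] at this
    _ = 4 * ((k:ℝ) - 1) * Dq E ψ := by
        rw [Multiset.sum_map_mul_left, degSum E (fun v => ψ v ^ 2)]
        rfl

lemma cheeger_nonneg (E : Multiset (Finset V)) (k : ℕ) : 0 ≤ cheeger E k := by
  apply Real.sInf_nonneg
  rintro x ⟨S, hS, hSu, rfl⟩
  positivity

lemma cheeger_bddBelow (E : Multiset (Finset V)) (k : ℕ) :
    BddBelow {x : ℝ | ∃ S : Finset V, S.Nonempty ∧ S ≠ Finset.univ ∧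
    x = ((∑ r ∈ Finset.Icc 1 (k - 1), Multiset.card (Er E S r) * r * (k - r) : ℕ) : ℝ) /
      (min (hvol E S) (hvol E Sᶜ) : ℕ)} := by
  refine ⟨0, ?_⟩
  rintro x ⟨S, hS, hSu, rfl⟩
  positivity

lemma cheeger_le (E : Multiset (Finset V)) (k : ℕ) (S : Finset V) (hS : S.Nonempty)
    (hSu : S ≠ Finset.univ) :
    cheeger E k ≤ ((∑ r ∈ Finset.Icc 1 (k - 1),
        Multiset.card (Er E S r) * r * (k - r) : ℕ) : ℝ) /
      ((min (hvol E S) (hvol E Sᶜ) : ℕ) : ℝ) :=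
  csInf_le (cheeger_bddBelow E k) ⟨S, hS, hSu, rfl⟩

/-- sweep conclusion -/
lemma sweep (E : Multiset (Finset V)) (k : ℕ) (hk : ∀ e ∈ E, e.card = k) (hk1 : 1 ≤ k)
    (hdegpos : ∀ v, 0 < hdeg E v) (ψ : V → ℝ) (hnn : ∀ v, 0 ≤ ψ v) (hψ0 : ψ ≠ 0)
    (hsupp : 2 * hvol E (Finset.univ.filter fun v => ψ v ≠ 0) ≤ hvol E Finset.univ) :
    cheeger E k ^ 2 * Dq E ψ ≤ ((k:ℝ) - 1) * Pq E ψ := by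
  have hDpos : 0 < Dq E ψ := Dq_pos E hdegpos ψ hψ0
  have hco := coarea E (cheeger E k)
    (((Finset.univ.image ψ).filter (fun x => 0 < x)).card) ψ hnn le_rfl ?_
  · have hc0 : 0 ≤ cheeger E k := cheeger_nonneg E k
    have h1 : (2 * cheeger E k * Dq E ψ) ^ 2 ≤ Mq E ψ ^ 2 := by
      apply pow_le_pow_left₀ (by positivity) hco
    have h2 := Mq_sq E ψ hnn
    have h3 := Yq_le E k hk ψ
    have hP := Pq_nonneg E ψ
    nlinarith [h1, h2, h3, hP, hDpos, sq_nonneg (cheeger E k)]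
  · intro t ht htne
    set S := slv ψ t with hSdef
    have hsub : S ⊆ Finset.univ.filter fun v => ψ v ≠ 0 := by
      intro v hv
      rw [hSdef, slv, Finset.mem_filter] at hv
      rw [Finset.mem_filter]
      exact ⟨Finset.mem_univ v, fun h => by rw [h] at hv; linarith [hv.2]⟩
    have hvolS : 2 * hvol E S ≤ hvol E Finset.univ :=
      le_trans (by have := hvol_mono E hsub; omega) hsupp
    have hSpos : 0 < hvol E S := hvol_pos E hdegpos htne
    have hSu : S ≠ Finset.univ := by
      intro h
      rw [h] at hSpos hvolS
      omega
    have hmin : min (hvol E S) (hvol E Sᶜ) = hvol E S := by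
      have := hvol_add_compl E S
      omega
    have hch := cheeger_le E k S htne hSu
    rw [bucket E k hk hk1 S, hmin] at hch
    have hSposR : (0:ℝ) < (hvol E S : ℝ) := by exact_mod_cast hSpos
    rw [div_eq_mul_inv] at hch
    calc cheeger E k * (hvol E S : ℝ)
        ≤ ((bnd E S : ℝ) * ((hvol E S : ℝ))⁻¹) * (hvol E S : ℝ) := by
          apply mul_le_mul_of_nonneg_right hch hSposR.le
      _ = (bnd E S : ℝ) := by field_simp

lemma split_sq (a b : ℝ) :
    (max a 0 - max b 0) ^ 2 + (max (-a) 0 - max (-b) 0) ^ 2 ≤ (a - b) ^ 2 := by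
  rcases le_total 0 a with ha | ha <;> rcases le_total 0 b with hb | hb
  · rw [max_eq_left ha, max_eq_left hb, max_eq_right (neg_nonpos.2 ha),
      max_eq_right (neg_nonpos.2 hb)]
    simp
  · rw [max_eq_left ha, max_eq_right hb, max_eq_right (neg_nonpos.2 ha),
      max_eq_left (neg_nonneg.2 hb)]
    nlinarith [mul_nonneg ha (neg_nonneg.2 hb)]
  · rw [max_eq_right ha, max_eq_left hb, max_eq_left (neg_nonneg.2 ha),
      max_eq_right (neg_nonpos.2 hb)]
    nlinarith [mul_nonneg (neg_nonneg.2 ha) hb]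
  · rw [max_eq_right ha, max_eq_right hb, max_eq_left (neg_nonneg.2 ha),
      max_eq_left (neg_nonneg.2 hb)]
    nlinarith

lemma sq_split (a : ℝ) : (max a 0) ^ 2 + (max (-a) 0) ^ 2 = a ^ 2 := by
  rcases le_total 0 a with ha | ha
  · rw [max_eq_left ha, max_eq_right (neg_nonpos.2 ha)]
    ring
  · rw [max_eq_right ha, max_eq_left (neg_nonneg.2 ha)]
    ring

lemma max_ne_zero_iff (a : ℝ) : max a 0 ≠ 0 ↔ 0 < a := by
  constructor
  · intro h
    rcases le_or_gt a 0 with h1 | h1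
    · exact absurd (max_eq_right h1) h
    · exact h1
  · intro h h2
    rw [max_eq_left h.le] at h2
    exact h.ne' h2

variable {V : Type*} [Fintype V] [DecidableEq V]

lemma median (E : Multiset (Finset V)) [Nonempty V] (f : V → ℝ) :
    ∃ c : ℝ, 2 * hvol E (Finset.univ.filter fun v => c < f v) ≤ hvol E Finset.univ ∧
      2 * hvol E (Finset.univ.filter fun v => f v < c) ≤ hvol E Finset.univ := by
  classical
  set I := Finset.univ.image f with hI
  have hIne : I.Nonempty := (Finset.univ_nonempty).image f
  set T := I.filter (fun x =>
    2 * hvol E (Finset.univ.filter fun v => x < f v) ≤ hvol E Finset.univ) with hT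
  have hTne : T.Nonempty := by
    refine ⟨I.max' hIne, Finset.mem_filter.2 ⟨I.max'_mem hIne, ?_⟩⟩
    have hempty : (Finset.univ.filter fun v => I.max' hIne < f v) = ∅ := by
      apply Finset.filter_false_of_mem
      intro v _
      exact not_lt.2 (I.le_max' (f v) (Finset.mem_image_of_mem f (Finset.mem_univ v)))
    rw [hempty]
    simp [hvol]
  set c := T.min' hTne with hc
  have hcT : c ∈ T := T.min'_mem hTne
  refine ⟨c, (Finset.mem_filter.1 hcT).2, ?_⟩
  rcases Finset.eq_empty_or_nonempty (Finset.univ.filter fun v => f v < c) with hW | hW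
  · rw [hW]
    simp [hvol]
  · obtain ⟨w, hw⟩ := hW
    have hfwc : f w < c := (Finset.mem_filter.1 hw).2
    set J := I.filter (fun x => x < c) with hJ
    have hJne : J.Nonempty :=
      ⟨f w, Finset.mem_filter.2 ⟨Finset.mem_image_of_mem f (Finset.mem_univ w), hfwc⟩⟩
    set x' := J.max' hJne with hx'
    have hx'J : x' ∈ J := J.max'_mem hJne
    have hx'c : x' < c := (Finset.mem_filter.1 hx'J).2
    have hx'I : x' ∈ I := (Finset.mem_filter.1 hx'J).1
    have hx'T : x' ∉ T := by
      intro h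
      exact absurd (T.min'_le x' h) (not_le.2 hx'c)
    have hx'big : ¬(2 * hvol E (Finset.univ.filter fun v => x' < f v)
        ≤ hvol E Finset.univ) := by
      intro h
      exact hx'T (Finset.mem_filter.2 ⟨hx'I, h⟩)
    push_neg at hx'big
    have hdisj : Disjoint (Finset.univ.filter fun v => f v < c)
        (Finset.univ.filter fun v => x' < f v) := by
      rw [Finset.disjoint_left]
      intro v hv hv2
      have h1 : f v < c := (Finset.mem_filter.1 hv).2
      have h2 : x' < f v := (Finset.mem_filter.1 hv2).2
      have h3 : f v ≤ x' := J.le_max' (f v)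
        (Finset.mem_filter.2 ⟨Finset.mem_image_of_mem f (Finset.mem_univ v), h1⟩)
      linarith
    have hunion : hvol E ((Finset.univ.filter fun v => f v < c)
        ∪ (Finset.univ.filter fun v => x' < f v))
        = hvol E (Finset.univ.filter fun v => f v < c)
          + hvol E (Finset.univ.filter fun v => x' < f v) := by
      rw [hvol, hvol, hvol, Finset.sum_union hdisj]
    have hle : hvol E ((Finset.univ.filter fun v => f v < c)
        ∪ (Finset.univ.filter fun v => x' < f v)) ≤ hvol E Finset.univ :=
      hvol_mono E (Finset.subset_univ _)
    omega

lemma key (E : Multiset (Finset V)) [Nonempty V] (k : ℕ) (hk : ∀ e ∈ E, e.card = k)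
    (hk1 : 1 ≤ k) (hdegpos : ∀ v, 0 < hdeg E v) (f : V → ℝ) (hf0 : f ≠ 0)
    (hmean : ∑ v, (hdeg E v : ℝ) * f v = 0) :
    cheeger E k ^ 2 ≤ 2 * ((k:ℝ) - 1) * ((k:ℝ) - RQ E f) := by
  obtain ⟨c, hcp, hcm⟩ := median E f
  set g := fun v => f v - c with hg
  have hvolU : (0:ℝ) < (hvol E Finset.univ : ℝ) := by
    exact_mod_cast hvol_pos E hdegpos Finset.univ_nonempty
  have hDf : 0 < Dq E f := Dq_pos E hdegpos f hf0
  have hDg : Dq E g = Dq E f + c ^ 2 * (hvol E Finset.univ : ℝ) := by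
    have hpt : ∀ v, (hdeg E v : ℝ) * g v ^ 2
        = (hdeg E v : ℝ) * f v ^ 2 - 2 * c * ((hdeg E v : ℝ) * f v)
          + c ^ 2 * (hdeg E v : ℝ) := fun v => by rw [hg]; ring
    rw [Dq, Finset.sum_congr rfl fun v _ => hpt v, Finset.sum_add_distrib,
      Finset.sum_sub_distrib, ← Finset.mul_sum, hmean, ← Finset.mul_sum,
      ← hvol_univ_cast]
    rw [Dq]
    ring
  have hDgge : Dq E f ≤ Dq E g := by
    rw [hDg]
    nlinarith [sq_nonneg c, hvolU]
  have hDgpos : 0 < Dq E g := lt_of_lt_of_le hDf hDgge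
  have hg0 : g ≠ 0 := by
    intro h
    have hfc : ∀ v, f v = c := by
      intro v
      have h1 : g v = 0 := by rw [h]; rfl
      have h2 : f v - c = 0 := h1
      linarith
    have hsum : ∑ v, (hdeg E v : ℝ) * f v = c * (hvol E Finset.univ : ℝ) := by
      rw [hvol_univ_cast, Finset.mul_sum]
      exact Finset.sum_congr rfl fun v _ => by rw [hfc v]; ring
    have hc0 : c = 0 := by
      rcases mul_eq_zero.1 (hsum ▸ hmean) with h1 | h1
      · exact h1
      · exact absurd h1 hvolU.ne'
    exact hf0 (funext fun v => by rw [Pi.zero_apply, hfc v, hc0])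
  have hPg : Pq E g = Pq E f := by
    rw [Pq, Pq]
    apply congrArg
    apply Multiset.map_congr rfl
    intro e _
    refine Finset.sum_congr rfl fun v _ => Finset.sum_congr rfl fun w _ => ?_
    rw [hg]
    ring_nf
  set gp := fun v => max (g v) 0 with hgp
  set gm := fun v => max (-(g v)) 0 with hgm
  have hsplitD : Dq E g = Dq E gp + Dq E gm := by
    rw [Dq, Dq, Dq, ← Finset.sum_add_distrib]
    refine Finset.sum_congr rfl fun v _ => ?_
    rw [hgp, hgm, ← mul_add, sq_split]
  have hsplitP : Pq E gp + Pq E gm ≤ Pq E g := by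
    rw [Pq, Pq, Pq, ← ms_map_add]
    apply Multiset.sum_map_le_sum_map
    intro e _
    rw [← Finset.sum_add_distrib]
    refine Finset.sum_le_sum fun v _ => ?_
    rw [← Finset.sum_add_distrib]
    exact Finset.sum_le_sum fun w _ => split_sq (g v) (g w)
  have hsuppp : (Finset.univ.filter fun v => gp v ≠ 0)
      = Finset.univ.filter fun v => c < f v := by
    apply Finset.filter_congr
    intro v _
    rw [hgp, max_ne_zero_iff, hg]
    constructor
    · intro h
      have h' : (0:ℝ) < f v - c := h
      linarith
    · intro h
      exact show (0:ℝ) < f v - c by linarith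
  have hsuppm : (Finset.univ.filter fun v => gm v ≠ 0)
      = Finset.univ.filter fun v => f v < c := by
    apply Finset.filter_congr
    intro v _
    rw [hgm, max_ne_zero_iff, hg]
    constructor
    · intro h
      have h' : (0:ℝ) < -(f v - c) := h
      linarith
    · intro h
      exact show (0:ℝ) < -(f v - c) by linarith
  have hDsum : Dq E g = Dq E gp + Dq E gm := hsplitD
  have main : ∃ ψ : V → ℝ, (∀ v, 0 ≤ ψ v) ∧ ψ ≠ 0 ∧
      2 * hvol E (Finset.univ.filter fun v => ψ v ≠ 0) ≤ hvol E Finset.univ ∧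
      Pq E ψ * Dq E g ≤ Pq E g * Dq E ψ := by
    by_cases hgm0 : gm = 0
    · have hgeq : gp = g := by
        funext v
        have h1 : gm v = 0 := by rw [hgm0]; rfl
        have hge : 0 ≤ g v := by
          rcases le_total 0 (g v) with h | h
          · exact h
          · have h2 : gm v = -(g v) := max_eq_left (neg_nonneg.2 h)
            rw [h1] at h2
            linarith
        exact max_eq_left hge
      refine ⟨gp, fun v => le_max_right _ _, by rw [hgeq]; exact hg0, ?_, ?_⟩
      · rw [hsuppp]
        exact hcp
      · rw [hgeq]
    by_cases hgp0 : gp = 0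
    · have hgeq : ∀ v, gm v = -(g v) := by
        intro v
        have h1 : gp v = 0 := by rw [hgp0]; rfl
        have hge : g v ≤ 0 := by
          rcases le_total (g v) 0 with h | h
          · exact h
          · have h2 : gp v = g v := max_eq_left h
            rw [h1] at h2
            linarith
        exact max_eq_left (neg_nonneg.2 hge)
      have hPm : Pq E gm = Pq E g := by
        rw [Pq, Pq]
        apply congrArg
        apply Multiset.map_congr rfl
        intro e _
        refine Finset.sum_congr rfl fun v _ => Finset.sum_congr rfl fun w _ => ?_
        rw [hgeq v, hgeq w]
        ring
      have hDm : Dq E gm = Dq E g := by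
        rw [Dq, Dq]
        refine Finset.sum_congr rfl fun v _ => ?_
        rw [hgeq v]
        ring
      refine ⟨gm, fun v => le_max_right _ _, ?_, ?_, ?_⟩
      · intro h
        apply hg0
        funext v
        have h1 : gm v = 0 := by rw [h]; rfl
        rw [hgeq v] at h1
        have : g v = 0 := by linarith
        simpa using this
      · rw [hsuppm]
        exact hcm
      · rw [hPm, hDm]
    · have hDp : 0 < Dq E gp := Dq_pos E hdegpos gp hgp0
      have hDm : 0 < Dq E gm := Dq_pos E hdegpos gm hgm0
      have hPp := Pq_nonneg E gp
      have hPmn := Pq_nonneg E gm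
      by_cases hcross : Pq E gp * Dq E gm ≤ Pq E gm * Dq E gp
      · refine ⟨gp, fun v => le_max_right _ _, hgp0, ?_, ?_⟩
        · rw [hsuppp]
          exact hcp
        · rw [hsplitD]
          nlinarith [mul_le_mul_of_nonneg_right hsplitP hDp.le, hcross]
      · push_neg at hcross
        refine ⟨gm, fun v => le_max_right _ _, hgm0, ?_, ?_⟩
        · rw [hsuppm]
          exact hcm
        · rw [hsplitD]
          nlinarith [mul_le_mul_of_nonneg_right hsplitP hDm.le, hcross.le]
  obtain ⟨ψ, hψnn, hψ0, hψsupp, hψratio⟩ := main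
  have hDψpos : 0 < Dq E ψ := Dq_pos E hdegpos ψ hψ0
  have hsw := sweep E k hk hk1 hdegpos ψ hψnn hψ0 hψsupp
  have hk1R : (0:ℝ) ≤ (k:ℝ) - 1 := by
    have : (1:ℝ) ≤ (k:ℝ) := by exact_mod_cast hk1
    linarith
  -- cheeger^2 * Dq g ≤ (k-1) * Pq g
  have step1 : cheeger E k ^ 2 * Dq E g ≤ ((k:ℝ) - 1) * Pq E g := by
    have h1 : cheeger E k ^ 2 * Dq E ψ * Dq E g ≤ ((k:ℝ) - 1) * Pq E ψ * Dq E g :=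
      mul_le_mul_of_nonneg_right hsw hDgpos.le
    have h2 : ((k:ℝ) - 1) * (Pq E ψ * Dq E g) ≤ ((k:ℝ) - 1) * (Pq E g * Dq E ψ) :=
      mul_le_mul_of_nonneg_left hψratio hk1R
    have h3 : cheeger E k ^ 2 * Dq E g * Dq E ψ ≤ ((k:ℝ) - 1) * Pq E g * Dq E ψ := by
      nlinarith [h1, h2]
    exact le_of_mul_le_mul_right (by linarith [h3]) hDψpos
  have step2 : cheeger E k ^ 2 * Dq E f ≤ ((k:ℝ) - 1) * Pq E f := by
    rw [← hPg]
    calc cheeger E k ^ 2 * Dq E f ≤ cheeger E k ^ 2 * Dq E g :=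
          mul_le_mul_of_nonneg_left hDgge (sq_nonneg _)
      _ ≤ _ := step1
  rw [Pq_eq E k hk f] at step2
  have hN : Nq E f = RQ E f * Dq E f := by
    rw [RQ_eq_div]
    field_simp
  rw [hN] at step2
  have final : cheeger E k ^ 2 * Dq E f
      ≤ (2 * ((k:ℝ) - 1) * ((k:ℝ) - RQ E f)) * Dq E f := by
    nlinarith [step2]
  exact le_of_mul_le_mul_right final hDf


end CheegerAux

theorem stmt8 {V : Type*} [Fintype V] [DecidableEq V] [Nonempty V]
    (E : Multiset (Finset V)) (k : ℕ)
    (hk : ∀ e ∈ E, e.card = k) (hconn : HConnected E) (hdegpos : ∀ v, 0 < hdeg E v)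
    (hass : ∀ v : V, hdeg E v ≤ ∑ w ∈ Finset.univ.erase v, hdeg E w) :
    cheeger E k ^ 2 / (2 * ((k : ℝ) - 1)) ≤ (k : ℝ) - lamSecond E ∧
      (k : ℝ) - lamSecond E ≤ 2 * ((k : ℝ) - 1) * cheeger E k := by
  have hk1 : 1 ≤ k := k_pos E k hk hdegpos
  rcases eq_or_lt_of_le hk1 with hk1' | hk2
  · -- k = 1
    have hkk : k = 1 := hk1'.symm
    subst hkk
    rw [lamSecond_one E hk hdegpos hass]
    have h0 : ((1:ℕ):ℝ) - 1 = 0 := by norm_num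
    constructor
    · rw [h0, mul_zero, div_zero]
    · rw [h0, mul_zero, zero_mul]
  · -- k ≥ 2
    have hkR : (1:ℝ) ≤ (k:ℝ) - 1 := by
      have h2 : (2:ℝ) ≤ (k:ℝ) := by exact_mod_cast hk2
      linarith
    have hpos2 : (0:ℝ) < 2 * ((k:ℝ) - 1) := by linarith
    constructor
    · have hb : lamSecond E ≤ (k:ℝ) - cheeger E k ^ 2 / (2 * ((k:ℝ) - 1)) := by
        apply lamSecond_le E _ hdegpos hass
        intro f hf0 hmean
        have hkey := key E k hk hk1 hdegpos f hf0 hmean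
        have h2 : cheeger E k ^ 2 / (2 * ((k:ℝ) - 1)) ≤ (k:ℝ) - RQ E f := by
          rw [div_le_iff₀ hpos2]
          nlinarith [hkey]
        linarith
      linarith [hb]
    · obtain ⟨v, w, hvw⟩ := exists_pair E hdegpos hass
      have hSne : ({v} : Finset V).Nonempty := ⟨v, Finset.mem_singleton_self v⟩
      have hSu : ({v} : Finset V) ≠ Finset.univ := by
        intro h
        have hw : w ∈ ({v} : Finset V) := h ▸ Finset.mem_univ w
        rw [Finset.mem_singleton] at hw
        exact hvw hw.symm
      have hle : ((k:ℝ) - lamSecond E) / 2 ≤ cheeger E k := by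
        rw [cheeger]
        refine le_csInf ⟨_, ⟨{v}, hSne, hSu, rfl⟩⟩ ?_
        rintro x ⟨S, hS2, hSu2, rfl⟩
        rw [bucket E k hk hk1 S]
        have hstep := easy_step E k hk hdegpos S hS2 hSu2
        rw [div_le_iff₀ (by norm_num : (0:ℝ) < 2)]
        calc (k:ℝ) - lamSecond E
            ≤ 2 * ((bnd E S : ℝ) / ((min (hvol E S) (hvol E Sᶜ) : ℕ) : ℝ)) := hstep
          _ = (bnd E S : ℝ) / ((min (hvol E S) (hvol E Sᶜ) : ℕ) : ℝ) * 2 := by ring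
      have hch := cheeger_nonneg E k
      nlinarith [hle, hch, hkR]
end

section
/- For a k-uniform hypergraph, the multiplicity of the eigenvalue k of the normalized Laplacian L equals the number of connected components of the hypergraph. -/
open Finset

private lemma countP_mul_eq {α : Type*} (s : Multiset α) (p : α → Prop) [DecidablePred p] (c : ℝ) :
    (s.countP p : ℝ) * c = (s.map fun e => if p e then c else 0).sum := by
  induction s using Multiset.induction with
  | empty => simp
  | cons a s ih =>
    by_cases h : p a <;>
      simp [Multiset.countP_cons, h, add_mul, ih, add_comm]

private lemma multiset_finset_sum_comm {α β : Type*} (s : Multiset α) (t : Finset β)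
    (h : α → β → ℝ) :
    ∑ w ∈ t, (s.map fun e => h e w).sum = (s.map fun e => ∑ w ∈ t, h e w).sum := by
  induction s using Multiset.induction with
  | empty => simp
  | cons a s ih => simp [Finset.sum_add_distrib, ih]

/-- T f v: sum over edges containing v of the sum of f over the edge. -/
private def Tsum {V : Type*} [DecidableEq V] (E : Multiset (Finset V)) (f : V → ℝ) (v : V) : ℝ :=
  (E.map fun e => if v ∈ e then ∑ w ∈ e, f w else 0).sum

private lemma mulVec_lapM {V : Type*} [Fintype V] [DecidableEq V] (E : Multiset (Finset V))
    (hdegpos : ∀ v, 0 < hdeg E v) (f : V → ℝ) (v : V) :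
    (lapM E).mulVec f v = Tsum E f v / (hdeg E v : ℝ) := by
  have hd : (hdeg E v : ℝ) ≠ 0 := by
    exact_mod_cast (hdegpos v).ne'
  have h1 : ∀ w, lapM E v w * f w
      = (if v = w then f w else 0) + (if v = w then 0 else (Evw E v w : ℝ) * f w) / (hdeg E v : ℝ) := by
    intro w
    simp only [lapM, adjM, Matrix.of_apply]
    split_ifs <;> ring
  have hsum : (lapM E).mulVec f v
      = f v + (∑ w, if v = w then 0 else (Evw E v w : ℝ) * f w) / (hdeg E v : ℝ) := by
    simp only [Matrix.mulVec, dotProduct]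
    rw [Finset.sum_congr rfl fun w _ => h1 w, Finset.sum_add_distrib, ← Finset.sum_div,
      Finset.sum_ite_eq]
    simp
  have h2 : (∑ w, if v = w then 0 else (Evw E v w : ℝ) * f w)
      = (∑ w, (Evw E v w : ℝ) * f w) - (hdeg E v : ℝ) * f v := by
    have : ∀ w, (if v = w then 0 else (Evw E v w : ℝ) * f w)
        = (Evw E v w : ℝ) * f w - (if v = w then (Evw E v w : ℝ) * f w else 0) := by
      intro w; split_ifs <;> ring
    rw [Finset.sum_congr rfl fun w _ => this w, Finset.sum_sub_distrib, Finset.sum_ite_eq]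
    have hvv : Evw E v v = hdeg E v := by simp [Evw, hdeg]
    simp [hvv]
  have h3 : (∑ w, (Evw E v w : ℝ) * f w) = Tsum E f v := by
    have : ∀ w, (Evw E v w : ℝ) * f w
        = (E.map fun e => if v ∈ e ∧ w ∈ e then f w else 0).sum := fun w =>
      countP_mul_eq E _ (f w)
    rw [Finset.sum_congr rfl fun w _ => this w, multiset_finset_sum_comm]
    refine congrArg Multiset.sum (Multiset.map_congr rfl fun e _ => ?_)
    by_cases hv : v ∈ e
    · simp only [hv, true_and, if_true]
      rw [Finset.sum_ite_mem]
      simp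
    · simp [hv]
  rw [hsum, h2, h3]
  field_simp
  ring

section comb
variable {V : Type*} [Fintype V] [DecidableEq V] (E : Multiset (Finset V)) (k : ℕ)

/-- The eigen-equation in combinatorial form. -/
private def EC (f : V → ℝ) : Prop := ∀ v, Tsum E f v = k * (hdeg E v : ℝ) * f v

private lemma step_lemma {f : V → ℝ} (hk : ∀ e ∈ E, e.card = k) (hec : EC E k f) (x y : V)
    (hnb : ∀ w, (∃ e ∈ E, x ∈ e ∧ w ∈ e) → f w ≤ f x)
    (hxy : ∃ e ∈ E, x ∈ e ∧ y ∈ e) : f y = f x := by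
  by_contra hne
  have hlt : f y < f x := lt_of_le_of_ne (hnb y hxy) hne
  obtain ⟨e0, he0, hx0, hy0⟩ := hxy
  have key : Tsum E f x = (E.map fun e => if x ∈ e then (k : ℝ) * f x else 0).sum := by
    rw [hec x, ← countP_mul_eq]
    push_cast [hdeg]
    ring
  have hle : ∀ e ∈ E, (if x ∈ e then ∑ w ∈ e, f w else 0)
      ≤ (if x ∈ e then (k : ℝ) * f x else 0) := by
    intro e he
    by_cases hx : x ∈ e
    · simp only [hx, if_true]
      calc ∑ w ∈ e, f w ≤ ∑ _w ∈ e, f x :=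
            Finset.sum_le_sum fun w hw => hnb w ⟨e, he, hx, hw⟩
        _ = (k : ℝ) * f x := by
            rw [Finset.sum_const, hk e he, nsmul_eq_mul]
    · simp [hx]
  have hstrict : (if x ∈ e0 then ∑ w ∈ e0, f w else 0) < (if x ∈ e0 then (k : ℝ) * f x else 0) := by
    simp only [hx0, if_true]
    calc ∑ w ∈ e0, f w < ∑ _w ∈ e0, f x :=
          Finset.sum_lt_sum (fun w hw => hnb w ⟨e0, he0, hx0, hw⟩) ⟨y, hy0, hlt⟩
      _ = (k : ℝ) * f x := by rw [Finset.sum_const, hk e0 he0, nsmul_eq_mul]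
  have := Multiset.sum_lt_sum (s := E)
    (f := fun e => if x ∈ e then ∑ w ∈ e, f w else 0)
    (g := fun e => if x ∈ e then (k : ℝ) * f x else 0) hle ⟨e0, he0, hstrict⟩
  rw [← key] at this
  exact absurd this (lt_irrefl _)

private lemma const_on_comp {f : V → ℝ} (hk : ∀ e ∈ E, e.card = k)
    (hdegpos : ∀ v, 0 < hdeg E v) (hec : EC E k f) {a b : V}
    (hab : Relation.EqvGen (fun a b : V => ∃ e ∈ E, a ∈ e ∧ b ∈ e) a b) : f a = f b := by
  classical
  set r : V → V → Prop := fun a b : V => ∃ e ∈ E, a ∈ e ∧ b ∈ e with hr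
  have hsymm : Symmetric r := fun u v ⟨e, he, hu, hv⟩ => ⟨e, he, hv, hu⟩
  have hsR : Symmetric (Relation.ReflTransGen r) := by
    haveI : Std.Symm r := ⟨hsymm⟩
    exact fun x y h => (Relation.ReflTransGen.stdSymm (r := r)).symm x y h
  have hab' : Relation.ReflTransGen r a b := by
    induction hab with
    | rel u v h => exact Relation.ReflTransGen.single h
    | refl => exact Relation.ReflTransGen.refl
    | symm u v h ih => exact hsR ih
    | trans u v w h1 h2 ih1 ih2 => exact ih1.trans ih2
  -- pick a maximiser of f on the component of a
  obtain ⟨v, hvC, hvmax⟩ := Finset.exists_max_image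
    (Finset.univ.filter fun w => Relation.ReflTransGen r a w) f
    ⟨a, Finset.mem_filter.mpr ⟨Finset.mem_univ a, Relation.ReflTransGen.refl⟩⟩
  have hva : Relation.ReflTransGen r a v := (Finset.mem_filter.mp hvC).2
  have hmax : ∀ w, Relation.ReflTransGen r v w → f w ≤ f v := fun w hw =>
    hvmax w (Finset.mem_filter.mpr ⟨Finset.mem_univ w, hva.trans hw⟩)
  have claim : ∀ x, Relation.ReflTransGen r v x → f x = f v := by
    intro x hx
    induction hx with
    | refl => rfl
    | tail hvc hcy ih =>
      rename_i c y
      have hnb : ∀ w, r c w → f w ≤ f c := by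
        intro w hcw
        rw [ih]
        exact hmax w (hvc.tail hcw)
      rw [step_lemma E k hk hec c y hnb hcy, ih]
  rw [claim a (hsR hva), claim b ((hsR hva).trans hab')]

end comb

private lemma eigen_iff {V : Type*} [Fintype V] [DecidableEq V] (E : Multiset (Finset V)) (k : ℕ)
    (hdegpos : ∀ v, 0 < hdeg E v) (f : V → ℝ) :
    (lapM E).mulVecLin f = (k : ℝ) • f ↔ EC E k f := by
  constructor
  · intro h v
    have hd : (hdeg E v : ℝ) ≠ 0 := by exact_mod_cast (hdegpos v).ne'
    have hv := congrFun h v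
    rw [Matrix.mulVecLin_apply, mulVec_lapM E hdegpos f v, Pi.smul_apply, smul_eq_mul,
      div_eq_iff hd] at hv
    rw [hv]; ring
  · intro h
    funext v
    rw [Matrix.mulVecLin_apply, mulVec_lapM E hdegpos f v, h v]
    have hd : (hdeg E v : ℝ) ≠ 0 := by exact_mod_cast (hdegpos v).ne'
    field_simp
    rw [Pi.smul_apply, smul_eq_mul]

private lemma const_EC {V : Type*} [Fintype V] [DecidableEq V] (E : Multiset (Finset V)) (k : ℕ)
    (hk : ∀ e ∈ E, e.card = k) (f : V → ℝ)
    (hconst : ∀ a b : V, (∃ e ∈ E, a ∈ e ∧ b ∈ e) → f a = f b) : EC E k f := by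
  intro v
  have : Tsum E f v = (E.map fun e => if v ∈ e then (k : ℝ) * f v else 0).sum := by
    refine congrArg Multiset.sum (Multiset.map_congr rfl fun e he => ?_)
    by_cases hv : v ∈ e
    · simp only [hv, if_true]
      have : ∀ w ∈ e, f w = f v := fun w hw => hconst w v ⟨e, he, hw, hv⟩
      rw [Finset.sum_congr rfl this, Finset.sum_const, hk e he, nsmul_eq_mul]
    · simp [hv]
  rw [this, ← countP_mul_eq]
  push_cast [hdeg]
  ring

theorem stmt9 {V : Type*} [Fintype V] [DecidableEq V] (E : Multiset (Finset V)) (k : ℕ)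
    (hk : ∀ e ∈ E, e.card = k) (hdegpos : ∀ v, 0 < hdeg E v) :
    Module.finrank ℝ
        ↥(Module.End.eigenspace (Matrix.mulVecLin (lapM E)) (k : ℝ)) =
      Nat.card (Quot (fun a b : V => ∃ e ∈ E, a ∈ e ∧ b ∈ e)) := by
  classical
  set r : V → V → Prop := fun a b : V => ∃ e ∈ E, a ∈ e ∧ b ∈ e with hr
  set Φ : (Quot r → ℝ) →ₗ[ℝ] (V → ℝ) := LinearMap.funLeft ℝ ℝ (Quot.mk r) with hΦ
  have hinj : Function.Injective Φ :=
    LinearMap.funLeft_injective_of_surjective ℝ ℝ _ (fun q => q.exists_rep)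
  have heq : Module.End.eigenspace (Matrix.mulVecLin (lapM E)) (k : ℝ) = LinearMap.range Φ := by
    ext f
    rw [Module.End.mem_eigenspace_iff, LinearMap.mem_range]
    constructor
    · intro h
      have hec : EC E k f := (eigen_iff E k hdegpos f).mp h
      refine ⟨Quot.lift f (fun a b hab =>
        const_on_comp E k hk hdegpos hec (Relation.EqvGen.rel a b hab)), ?_⟩
      funext v
      rfl
    · rintro ⟨g, rfl⟩
      refine (eigen_iff E k hdegpos _).mpr (const_EC E k hk _ fun a b hab => ?_)
      show g (Quot.mk r a) = g (Quot.mk r b)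
      rw [Quot.sound hab]
  rw [heq]
  haveI : Fintype (Quot r) := Fintype.ofFinite _
  rw [← (LinearEquiv.ofInjective Φ hinj).finrank_eq,
    Module.finrank_fintype_fun_eq_card, Nat.card_eq_fintype_card]
end
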